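/- arXiv:2509.07232 — 3 statements merged into one kernel-verified Lean document; each statement's English description precedes it below -/
import Mathlib

section
/- Let C be a stochastically increasing bivariate copula and set h_v(t) := ∂₁C(t,v). Then ξ(C) = ψ(C) if and only if there exist non-decreasing measurable functions A, B : [0,1] → [0,1] and a measurable function α : [0,1] → [0,1] such that for almost every v ∈ [0,1] one has h_v(t) = 𝟙_{t < A(v)} + α(v)·𝟙_{(A(v),B(v))}(t) for almost every t ∈ [0,1]. -/
open MeasureTheory Set

noncomputable section

def IsCopula (C : ℝ → ℝ → ℝ) : Prop :=
  (∀ u ∈ Icc (0:ℝ) 1, ∀ v ∈ Icc (0:ℝ) 1, C u v ∈ Icc (0:ℝ) 1) ∧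
  (∀ u ∈ Icc (0:ℝ) 1, C u 0 = 0 ∧ C u 1 = u) ∧
  (∀ v ∈ Icc (0:ℝ) 1, C 0 v = 0 ∧ C 1 v = v) ∧
  (∀ u₁ ∈ Icc (0:ℝ) 1, ∀ u₂ ∈ Icc (0:ℝ) 1, ∀ v₁ ∈ Icc (0:ℝ) 1, ∀ v₂ ∈ Icc (0:ℝ) 1,
    u₁ ≤ u₂ → v₁ ≤ v₂ → 0 ≤ C u₂ v₂ - C u₁ v₂ - C u₂ v₁ + C u₁ v₁)

/-- The (a.e. defined) partial derivative of `C` with respect to its first argument. -/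
def d1 (C : ℝ → ℝ → ℝ) (t v : ℝ) : ℝ := deriv (fun s => C s v) t

/-- Chatterjee's rank correlation. -/
def xi (C : ℝ → ℝ → ℝ) : ℝ :=
  6 * (∫ v in (0:ℝ)..1, ∫ t in (0:ℝ)..1, (d1 C t v) ^ 2) - 2

/-- Spearman's footrule. -/
def psi (C : ℝ → ℝ → ℝ) : ℝ :=
  6 * (∫ v in (0:ℝ)..1, C v v) - 2

/-- Stochastically increasing: for each `v`, `t ↦ ∂₁C(t,v)` agrees a.e. on `[0,1]`
with a non-increasing function. -/
def IsSI (C : ℝ → ℝ → ℝ) : Prop :=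
  ∀ v ∈ Icc (0:ℝ) 1, ∃ g : ℝ → ℝ, AntitoneOn g (Icc (0:ℝ) 1) ∧
    (∀ᵐ t ∂(volume.restrict (Icc (0:ℝ) 1)), d1 C t v = g t)

open Filter Topology
open scoped ENNReal NNReal

def clamp01 (s : ℝ) : ℝ := max 0 (min s 1)

lemma clamp01_mem (s : ℝ) : clamp01 s ∈ Icc (0:ℝ) 1 :=
  ⟨le_max_left _ _, max_le (by norm_num) (min_le_right _ _)⟩

lemma clamp01_eq {s : ℝ} (hs : s ∈ Icc (0:ℝ) 1) : clamp01 s = s := by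
  simp [clamp01, min_eq_left hs.2, max_eq_right hs.1]

lemma clamp01_mono : Monotone clamp01 :=
  fun _ _ h => max_le_max le_rfl (min_le_min h le_rfl)

lemma clamp01_lip : LipschitzWith 1 clamp01 := (LipschitzWith.id.min_const 1).const_max 0

def Fv (C : ℝ → ℝ → ℝ) (v : ℝ) : ℝ → ℝ := fun s => C (clamp01 s) v

def Hv (C : ℝ → ℝ → ℝ) (v t : ℝ) : ℝ := deriv (Fv C v) t

variable {C : ℝ → ℝ → ℝ}

lemma cop_mono (hC : IsCopula C) {v : ℝ} (hv : v ∈ Icc (0:ℝ) 1) {u₁ u₂ : ℝ}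
    (h1 : u₁ ∈ Icc (0:ℝ) 1) (h2 : u₂ ∈ Icc (0:ℝ) 1) (h12 : u₁ ≤ u₂) : C u₁ v ≤ C u₂ v := by
  have h4 := hC.2.2.2 u₁ h1 u₂ h2 0 ⟨le_refl 0, zero_le_one⟩ v hv h12 hv.1
  have e1 := (hC.2.1 u₁ h1).1
  have e2 := (hC.2.1 u₂ h2).1
  linarith

lemma cop_lip (hC : IsCopula C) {v : ℝ} (hv : v ∈ Icc (0:ℝ) 1) {u₁ u₂ : ℝ}
    (h1 : u₁ ∈ Icc (0:ℝ) 1) (h2 : u₂ ∈ Icc (0:ℝ) 1) (h12 : u₁ ≤ u₂) :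
    C u₂ v - C u₁ v ≤ u₂ - u₁ := by
  have h4 := hC.2.2.2 u₁ h1 u₂ h2 v hv 1 ⟨zero_le_one, le_refl 1⟩ h12 hv.2
  have e1 := (hC.2.1 u₁ h1).2
  have e2 := (hC.2.1 u₂ h2).2
  linarith

lemma Fv_mono (hC : IsCopula C) {v : ℝ} (hv : v ∈ Icc (0:ℝ) 1) : Monotone (Fv C v) :=
  fun _ _ h => cop_mono hC hv (clamp01_mem _) (clamp01_mem _) (clamp01_mono h)

lemma Fv_lip (hC : IsCopula C) {v : ℝ} (hv : v ∈ Icc (0:ℝ) 1) : LipschitzWith 1 (Fv C v) := by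
  apply LipschitzWith.of_dist_le_mul
  have key : ∀ s t : ℝ, clamp01 t ≤ clamp01 s →
      |Fv C v s - Fv C v t| ≤ |clamp01 s - clamp01 t| := by
    intro s t h
    have hle := cop_lip hC hv (clamp01_mem t) (clamp01_mem s) h
    have hge := cop_mono hC hv (clamp01_mem t) (clamp01_mem s) h
    rw [abs_of_nonneg (by simpa [Fv] using sub_nonneg.mpr hge),
      abs_of_nonneg (sub_nonneg.mpr h)]
    simpa [Fv] using hle
  intro s t
  rw [Real.dist_eq, Real.dist_eq, NNReal.coe_one, one_mul]
  have hcl : |clamp01 s - clamp01 t| ≤ |s - t| := by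
    simpa [Real.dist_eq] using clamp01_lip.dist_le_mul s t
  rcases le_total (clamp01 t) (clamp01 s) with h | h
  · exact (key s t h).trans hcl
  · rw [abs_sub_comm (Fv C v s)]
    refine (key t s h).trans ?_
    rw [abs_sub_comm (clamp01 t)]
    exact hcl

lemma Fv_zero (hC : IsCopula C) {v : ℝ} (hv : v ∈ Icc (0:ℝ) 1) : Fv C v 0 = 0 := by
  have : clamp01 0 = 0 := clamp01_eq ⟨le_refl 0, zero_le_one⟩
  simp only [Fv, this]
  exact (hC.2.2.1 v hv).1

lemma Fv_one (hC : IsCopula C) {v : ℝ} (hv : v ∈ Icc (0:ℝ) 1) : Fv C v 1 = v := by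
  have : clamp01 1 = 1 := clamp01_eq ⟨zero_le_one, le_refl 1⟩
  simp only [Fv, this]
  exact (hC.2.2.1 v hv).2

lemma Fv_eq {v s : ℝ} (hs : s ∈ Icc (0:ℝ) 1) : Fv C v s = C s v := by
  simp [Fv, clamp01_eq hs]

lemma Hv_eq_d1 (v : ℝ) {t : ℝ} (ht : t ∈ Ioo (0:ℝ) 1) : Hv C v t = d1 C t v := by
  apply Filter.EventuallyEq.deriv_eq
  filter_upwards [Ioo_mem_nhds ht.1 ht.2] with s hs
  exact Fv_eq ⟨hs.1.le, hs.2.le⟩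

lemma Hv_meas (v : ℝ) : Measurable (Hv C v) := measurable_deriv _




lemma slope_nonneg_of_monotone {f : ℝ → ℝ} (hf : Monotone f) (x y : ℝ) :
    0 ≤ slope f x y := by
  wlog h : x ≤ y generalizing x y
  · rw [slope_comm]; exact this _ _ (le_of_not_ge h)
  rcases eq_or_lt_of_le h with rfl | h
  · simp [slope]
  · rw [slope_def_field]
    exact div_nonneg (by simpa using hf h.le) (by linarith)

lemma slope_le_one_of_lip {f : ℝ → ℝ} (hl : LipschitzWith 1 f) (x y : ℝ) :
    slope f x y ≤ 1 := by
  wlog h : x ≤ y generalizing x y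
  · rw [slope_comm]; exact this _ _ (le_of_not_ge h)
  rcases eq_or_lt_of_le h with rfl | h
  · simp [slope]
  · have hd : |f y - f x| ≤ |y - x| := by
      simpa [Real.dist_eq] using hl.dist_le_mul y x
    rw [slope_def_field, div_le_one (by linarith)]
    calc f y - f x ≤ |f y - f x| := le_abs_self _
      _ ≤ |y - x| := hd
      _ = y - x := abs_of_pos (by linarith)

lemma deriv_nonneg_of_monotone {f : ℝ → ℝ} (hf : Monotone f) (x : ℝ) : 0 ≤ deriv f x := by
  by_cases hd : DifferentiableAt ℝ f x
  · have h := hd.hasDerivAt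
    rw [hasDerivAt_iff_tendsto_slope] at h
    exact ge_of_tendsto h (Eventually.of_forall fun y => slope_nonneg_of_monotone hf x y)
  · simp [deriv_zero_of_not_differentiableAt hd]

lemma deriv_le_one_of_lip {f : ℝ → ℝ} (hl : LipschitzWith 1 f) (x : ℝ) : deriv f x ≤ 1 := by
  by_cases hd : DifferentiableAt ℝ f x
  · have h := hd.hasDerivAt
    rw [hasDerivAt_iff_tendsto_slope] at h
    exact le_of_tendsto h (Eventually.of_forall fun y => slope_le_one_of_lip hl x y)
  · simp [deriv_zero_of_not_differentiableAt hd]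


lemma ftc_lip {f : ℝ → ℝ} (hf : Monotone f) (hl : LipschitzWith 1 f) {a b : ℝ} (hab : a ≤ b) :
    ∫ x in a..b, deriv f x = f b - f a := by
  have hcont : Continuous f := hl.continuous
  set h : ℕ → ℝ := fun n => 1 / ((n : ℝ) + 1) with hh
  have hhpos : ∀ n, 0 < h n := fun n => by positivity
  set q : ℕ → ℝ → ℝ := fun n x => ((n : ℝ) + 1) * (f (x + h n) - f x) with hq
  -- pointwise convergence a.e.
  have hconv : ∀ᵐ x, Tendsto (fun n => q n x) atTop (𝓝 (deriv f x)) := by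
    filter_upwards [hf.ae_differentiableAt] with x hx
    have hder := hx.hasDerivAt.tendsto_slope_zero
    have hseq : Tendsto h atTop (𝓝[≠] (0:ℝ)) := by
      refine tendsto_nhdsWithin_of_tendsto_nhds_of_eventually_within _ ?_ ?_
      · exact tendsto_one_div_add_atTop_nhds_zero_nat
      · exact Eventually.of_forall fun n => (hhpos n).ne'
    have := hder.comp hseq
    have heq : ∀ n, (h n)⁻¹ • (f (x + h n) - f x) = q n x := by
      intro n
      simp only [hq, hh, smul_eq_mul, one_div, inv_inv]
    simpa only [Function.comp_def, heq] using this
  -- dominated convergence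
  have hbound : ∀ n, ∀ x, |q n x| ≤ 1 := by
    intro n x
    have hd : |f (x + h n) - f x| ≤ |x + h n - x| := by
      simpa [Real.dist_eq] using hl.dist_le_mul (x + h n) x
    rw [abs_mul]
    have h1 : |((n:ℝ) + 1)| = (n:ℝ) + 1 := abs_of_pos (by positivity)
    have h2 : |x + h n - x| = h n := by
      rw [add_sub_cancel_left, abs_of_pos (hhpos n)]
    calc |((n:ℝ)+1)| * |f (x + h n) - f x| ≤ ((n:ℝ)+1) * h n := by
          rw [h1]; exact mul_le_mul_of_nonneg_left (hd.trans_eq h2) (by positivity)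
      _ = 1 := by simp only [hh]; field_simp
  have hDCT : Tendsto (fun n => ∫ x in a..b, q n x) atTop (𝓝 (∫ x in a..b, deriv f x)) := by
    have hqc : ∀ n, Continuous fun x => q n x := by
      intro n
      have hca : Continuous fun x => f (x + h n) := hcont.comp (continuous_add_right _)
      exact continuous_const.mul (hca.sub hcont)
    apply intervalIntegral.tendsto_integral_filter_of_dominated_convergence (fun _ => 1)
    · exact Eventually.of_forall fun n => (hqc n).aestronglyMeasurable
    · exact Eventually.of_forall fun n => Eventually.of_forall fun x _ => by
        simpa using hbound n x
    · exact intervalIntegrable_const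
    · exact hconv.mono fun x hx _ => hx
  -- compute the integral of q n
  have hint : ∀ n, ∫ x in a..b, q n x =
      ((n:ℝ) + 1) * ((∫ x in b..(b + h n), f x) - ∫ x in a..(a + h n), f x) := by
    intro n
    have hint1 : IntervalIntegrable f volume a b := hcont.intervalIntegrable _ _
    have h2 : (∫ x in a..b, f (x + h n)) = ∫ x in (a + h n)..(b + h n), f x :=
      intervalIntegral.integral_comp_add_right f (h n)
    have h3 : (∫ x in a..(a + h n), f x) + ∫ x in (a + h n)..(b + h n), f x
        = ∫ x in a..(b + h n), f x :=
      intervalIntegral.integral_add_adjacent_intervals (hcont.intervalIntegrable _ _)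
        (hcont.intervalIntegrable _ _)
    have h4 : (∫ x in a..b, f x) + ∫ x in b..(b + h n), f x = ∫ x in a..(b + h n), f x :=
      intervalIntegral.integral_add_adjacent_intervals (hcont.intervalIntegrable _ _)
        (hcont.intervalIntegrable _ _)
    have hca : Continuous fun x => f (x + h n) := hcont.comp (continuous_add_right _)
    have h5 : (∫ x in a..b, q n x)
        = ((n:ℝ)+1) * ((∫ x in a..b, f (x + h n)) - ∫ x in a..b, f x) := by
      rw [← intervalIntegral.integral_sub (hca.intervalIntegrable _ _) hint1,
        ← intervalIntegral.integral_const_mul]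
    rw [h5, h2]
    have h6 : (∫ x in (a + h n)..(b + h n), f x) - ∫ x in a..b, f x
        = (∫ x in b..(b + h n), f x) - ∫ x in a..(a + h n), f x := by linarith
    rw [h6]
  -- squeeze the right-hand side
  have hsq : Tendsto (fun n => ∫ x in a..b, q n x) atTop (𝓝 (f b - f a)) := by
    have hmono_bound : ∀ (c : ℝ) (n : ℕ),
        (f c) * h n ≤ (∫ x in c..(c + h n), f x) ∧
        (∫ x in c..(c + h n), f x) ≤ f (c + h n) * h n := by
      intro c n
      constructor
      · have := intervalIntegral.integral_mono_on (by linarith [hhpos n] : c ≤ c + h n)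
          (intervalIntegrable_const (μ := volume) (c := f c)) (hcont.intervalIntegrable _ _)
          (fun x hx => hf hx.1)
        simpa [mul_comm, add_sub_cancel_left] using this
      · have := intervalIntegral.integral_mono_on (by linarith [hhpos n] : c ≤ c + h n)
          (hcont.intervalIntegrable _ _) (intervalIntegrable_const (μ := volume) (c := f (c + h n)))
          (fun x hx => hf hx.2)
        simpa [mul_comm, add_sub_cancel_left] using this
    rw [show (fun n => ∫ x in a..b, q n x) = fun (n : ℕ) =>
      ((n:ℝ) + 1) * ((∫ x in b..(b + h n), f x) - ∫ x in a..(a + h n), f x) from funext hint]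
    have hlo : ∀ n, f b - f (a + h n) ≤
        ((n:ℝ) + 1) * ((∫ x in b..(b + h n), f x) - ∫ x in a..(a + h n), f x) := by
      intro n
      have h1 := (hmono_bound b n).1
      have h2 := (hmono_bound a n).2
      have hn1 : ((n:ℝ)+1) * h n = 1 := by simp only [hh]; field_simp
      have hA : f b * h n - f (a + h n) * h n ≤
          (∫ x in b..(b + h n), f x) - ∫ x in a..(a + h n), f x := by linarith
      have hB := mul_le_mul_of_nonneg_left hA (show (0:ℝ) ≤ (n:ℝ)+1 by positivity)
      have key : ((n:ℝ)+1) * (f b * h n - f (a + h n) * h n) = f b - f (a + h n) := by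
        have : ((n:ℝ)+1) * (f b * h n - f (a + h n) * h n)
            = (((n:ℝ)+1) * h n) * (f b - f (a + h n)) := by ring
        rw [this, hn1, one_mul]
      linarith
    have hhi : ∀ n : ℕ, ((n:ℝ) + 1) * ((∫ x in b..(b + h n), f x) - ∫ x in a..(a + h n), f x)
        ≤ f (b + h n) - f a := by
      intro n
      have h1 := (hmono_bound b n).2
      have h2 := (hmono_bound a n).1
      have hn1 : ((n:ℝ)+1) * h n = 1 := by simp only [hh]; field_simp
      have hA : (∫ x in b..(b + h n), f x) - ∫ x in a..(a + h n), f x ≤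
          f (b + h n) * h n - f a * h n := by linarith
      have hB := mul_le_mul_of_nonneg_left hA (show (0:ℝ) ≤ (n:ℝ)+1 by positivity)
      have key : ((n:ℝ)+1) * (f (b + h n) * h n - f a * h n) = f (b + h n) - f a := by
        have : ((n:ℝ)+1) * (f (b + h n) * h n - f a * h n)
            = (((n:ℝ)+1) * h n) * (f (b + h n) - f a) := by ring
        rw [this, hn1, one_mul]
      linarith
    have hh0 : Tendsto (fun n : ℕ => h n) atTop (𝓝 0) := by
      rw [hh]; exact tendsto_one_div_add_atTop_nhds_zero_nat
    have htend : Tendsto (fun n => a + h n) atTop (𝓝 a) := by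
      simpa using tendsto_const_nhds.add hh0
    have htendb : Tendsto (fun n => b + h n) atTop (𝓝 b) := by
      simpa using tendsto_const_nhds.add hh0
    have hL : Tendsto (fun n => f b - f (a + h n)) atTop (𝓝 (f b - f a)) :=
      tendsto_const_nhds.sub ((hcont.continuousAt.tendsto).comp htend)
    have hU : Tendsto (fun n => f (b + h n) - f a) atTop (𝓝 (f b - f a)) :=
      ((hcont.continuousAt.tendsto).comp htendb).sub tendsto_const_nhds
    exact tendsto_of_tendsto_of_tendsto_of_le_of_le hL hU hlo hhi
  exact tendsto_nhds_unique hDCT hsq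


section D
variable {C : ℝ → ℝ → ℝ}

lemma Hv_mem (hC : IsCopula C) {v : ℝ} (hv : v ∈ Icc (0:ℝ) 1) (t : ℝ) :
    Hv C v t ∈ Icc (0:ℝ) 1 :=
  ⟨deriv_nonneg_of_monotone (Fv_mono hC hv) t, deriv_le_one_of_lip (Fv_lip hC hv) t⟩

lemma Hv_ftc (hC : IsCopula C) {v : ℝ} (hv : v ∈ Icc (0:ℝ) 1) {a b : ℝ} (hab : a ≤ b) :
    ∫ t in a..b, Hv C v t = Fv C v b - Fv C v a :=
  ftc_lip (Fv_mono hC hv) (Fv_lip hC hv) hab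

lemma Hv_int01 (hC : IsCopula C) {v : ℝ} (hv : v ∈ Icc (0:ℝ) 1) :
    ∫ t in (0:ℝ)..1, Hv C v t = v := by
  rw [Hv_ftc hC hv zero_le_one, Fv_one hC hv, Fv_zero hC hv, sub_zero]

lemma Hv_int0v (hC : IsCopula C) {v : ℝ} (hv : v ∈ Icc (0:ℝ) 1) :
    ∫ t in (0:ℝ)..v, Hv C v t = C v v := by
  rw [Hv_ftc hC hv hv.1, Fv_zero hC hv, sub_zero, Fv_eq hv]

/-- set-integral version over `Icc 0 1`. -/
lemma Hv_setint (hC : IsCopula C) {v : ℝ} (hv : v ∈ Icc (0:ℝ) 1) :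
    ∫ t in Icc (0:ℝ) 1, Hv C v t = v := by
  rw [integral_Icc_eq_integral_Ioc, ← intervalIntegral.integral_of_le zero_le_one]
  exact Hv_int01 hC hv

lemma Hv_setint0v (hC : IsCopula C) {v : ℝ} (hv : v ∈ Icc (0:ℝ) 1) :
    ∫ t in Icc (0:ℝ) v, Hv C v t = C v v := by
  rw [integral_Icc_eq_integral_Ioc, ← intervalIntegral.integral_of_le hv.1]
  exact Hv_int0v hC hv

lemma Hv_integrableOn (hC : IsCopula C) {v : ℝ} (hv : v ∈ Icc (0:ℝ) 1) {s : Set ℝ}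
    (hs : s ⊆ Icc (0:ℝ) 1) : IntegrableOn (Hv C v) s := by
  apply Measure.integrableOn_of_bounded
  · exact ((measure_mono hs).trans_lt (by simp)).ne
  · exact (Hv_meas v).aestronglyMeasurable
  · filter_upwards with t
    have := Hv_mem hC hv t
    rw [Real.norm_eq_abs, abs_le]
    exact ⟨by linarith [this.1], this.2⟩

lemma Hv_mono_ae (hC : IsCopula C) {v v' : ℝ} (hv : v ∈ Icc (0:ℝ) 1) (hv' : v' ∈ Icc (0:ℝ) 1)
    (hvv : v ≤ v') : ∀ᵐ t, Hv C v t ≤ Hv C v' t := by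
  filter_upwards [(Fv_mono hC hv).ae_differentiableAt, (Fv_mono hC hv').ae_differentiableAt]
    with t h1 h2
  have hG : Monotone (fun s => Fv C v' s - Fv C v s) := by
    intro s s' hss
    have h4 := hC.2.2.2 (clamp01 s) (clamp01_mem s) (clamp01 s') (clamp01_mem s') v hv v' hv'
      (clamp01_mono hss) hvv
    simp only [Fv]
    linarith
  have hd : deriv (fun s => Fv C v' s - Fv C v s) t = Hv C v' t - Hv C v t := deriv_sub h2 h1
  have := deriv_nonneg_of_monotone hG t
  rw [hd] at this
  linarith

end D


section E
variable {C : ℝ → ℝ → ℝ}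

def SA (C : ℝ → ℝ → ℝ) (w : ℝ) : Set ℝ := Icc (0:ℝ) 1 ∩ {t | 1 ≤ Hv C w t}
def SB (C : ℝ → ℝ → ℝ) (w : ℝ) : Set ℝ := Icc (0:ℝ) 1 ∩ {t | 0 < Hv C w t}

def Av (C : ℝ → ℝ → ℝ) (v : ℝ) : ℝ := (volume (SA C (clamp01 v))).toReal
def Bv (C : ℝ → ℝ → ℝ) (v : ℝ) : ℝ := (volume (SB C (clamp01 v))).toReal
def Alv (C : ℝ → ℝ → ℝ) (v : ℝ) : ℝ :=
  if Bv C v = Av C v then 0 else (v - Av C v) / (Bv C v - Av C v)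

lemma SA_meas (w : ℝ) : MeasurableSet (SA C w) :=
  measurableSet_Icc.inter (measurableSet_le measurable_const (Hv_meas w))
lemma SB_meas (w : ℝ) : MeasurableSet (SB C w) :=
  measurableSet_Icc.inter (measurableSet_lt measurable_const (Hv_meas w))

lemma vol_SA_le (w : ℝ) : volume (SA C w) ≤ 1 := by
  refine (measure_mono inter_subset_left).trans ?_
  simp [Real.volume_Icc]
lemma vol_SB_le (w : ℝ) : volume (SB C w) ≤ 1 := by
  refine (measure_mono inter_subset_left).trans ?_
  simp [Real.volume_Icc]

lemma vol_SA_fin (w : ℝ) : volume (SA C w) ≠ ⊤ := ((vol_SA_le w).trans_lt (by simp)).ne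
lemma vol_SB_fin (w : ℝ) : volume (SB C w) ≠ ⊤ := ((vol_SB_le w).trans_lt (by simp)).ne

lemma Av_mem (v : ℝ) : Av C v ∈ Icc (0:ℝ) 1 := by
  constructor
  · exact ENNReal.toReal_nonneg
  · rw [show (1:ℝ) = (1:ℝ≥0∞).toReal by simp]
    exact ENNReal.toReal_mono (by simp) (vol_SA_le _)

lemma Bv_mem (v : ℝ) : Bv C v ∈ Icc (0:ℝ) 1 := by
  constructor
  · exact ENNReal.toReal_nonneg
  · rw [show (1:ℝ) = (1:ℝ≥0∞).toReal by simp]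
    exact ENNReal.toReal_mono (by simp) (vol_SB_le _)

lemma Av_mono (hC : IsCopula C) : Monotone (Av C) := by
  intro v v' hvv
  have hae := Hv_mono_ae hC (clamp01_mem v) (clamp01_mem v') (clamp01_mono hvv)
  refine ENNReal.toReal_mono (vol_SA_fin _) (measure_mono_ae ?_)
  filter_upwards [hae] with t ht hts
  exact ⟨hts.1, ht.trans' hts.2⟩

lemma Bv_mono (hC : IsCopula C) : Monotone (Bv C) := by
  intro v v' hvv
  have hae := Hv_mono_ae hC (clamp01_mem v) (clamp01_mem v') (clamp01_mono hvv)
  refine ENNReal.toReal_mono (vol_SB_fin _) (measure_mono_ae ?_)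
  filter_upwards [hae] with t ht hts
  exact ⟨hts.1, hts.2.trans_le ht⟩

lemma Av_le_Bv (v : ℝ) : Av C v ≤ Bv C v := by
  refine ENNReal.toReal_mono (vol_SB_fin _) (measure_mono ?_)
  exact fun t ht => ⟨ht.1, mem_setOf.mpr (lt_of_lt_of_le zero_lt_one (mem_setOf.mp ht.2))⟩

lemma const_integrableOn {c : ℝ} {s : Set ℝ} (hs : s ⊆ Icc (0:ℝ) 1) :
    IntegrableOn (fun _ : ℝ => c) s := by
  apply (integrableOn_const_iff).mpr
  right
  exact (measure_mono hs).trans_lt (by simp)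

lemma Av_le (hC : IsCopula C) {v : ℝ} (hv : v ∈ Icc (0:ℝ) 1) : Av C v ≤ v := by
  have hcl : clamp01 v = v := clamp01_eq hv
  have h1 : Av C v = ∫ t in SA C v, (1:ℝ) := by
    rw [setIntegral_const, smul_eq_mul, mul_one, Av, hcl]; rfl
  rw [h1]
  calc ∫ t in SA C v, (1:ℝ) ≤ ∫ t in SA C v, Hv C v t := by
        apply setIntegral_mono_on (const_integrableOn inter_subset_left)
          (Hv_integrableOn hC hv inter_subset_left) (SA_meas v)
        exact fun t ht => ht.2
    _ ≤ ∫ t in Icc (0:ℝ) 1, Hv C v t := by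
        apply setIntegral_mono_set (Hv_integrableOn hC hv (subset_refl _))
        · exact Eventually.of_forall fun t => (Hv_mem hC hv t).1
        · exact HasSubset.Subset.eventuallyLE inter_subset_left
    _ = v := Hv_setint hC hv

lemma le_Bv (hC : IsCopula C) {v : ℝ} (hv : v ∈ Icc (0:ℝ) 1) : v ≤ Bv C v := by
  have hcl : clamp01 v = v := clamp01_eq hv
  have hsplit := integral_inter_add_diff (s := Icc (0:ℝ) 1) (t := SB C v) (SB_meas v)
    (Hv_integrableOn hC hv (subset_refl _)) (μ := volume)
  have hint : Icc (0:ℝ) 1 ∩ SB C v = SB C v :=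
    inter_eq_self_of_subset_right inter_subset_left
  have hzero : ∫ t in Icc (0:ℝ) 1 \ SB C v, Hv C v t = 0 := by
    rw [setIntegral_congr_fun (measurableSet_Icc.diff (SB_meas v))
      (g := fun _ => (0:ℝ)) ?_, integral_zero]
    intro t ht
    have h0 := (Hv_mem hC hv t).1
    have hn : ¬ (0 < Hv C v t) := fun hlt => ht.2 ⟨ht.1, hlt⟩
    show Hv C v t = 0
    linarith [le_of_not_gt hn]
  rw [hint, hzero, add_zero] at hsplit
  calc v = ∫ t in Icc (0:ℝ) 1, Hv C v t := (Hv_setint hC hv).symm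
    _ = ∫ t in SB C v, Hv C v t := hsplit.symm
    _ ≤ ∫ t in SB C v, (1:ℝ) := by
        apply setIntegral_mono_on (Hv_integrableOn hC hv inter_subset_left)
          (const_integrableOn inter_subset_left) (SB_meas v)
        exact fun t _ => (Hv_mem hC hv t).2
    _ = Bv C v := by rw [setIntegral_const, smul_eq_mul, mul_one, Bv, hcl]; rfl

lemma Av_measurable (hC : IsCopula C) : Measurable (Av C) := (Av_mono hC).measurable
lemma Bv_measurable (hC : IsCopula C) : Measurable (Bv C) := (Bv_mono hC).measurable

lemma Alv_measurable (hC : IsCopula C) : Measurable (Alv C) := by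
  unfold Alv
  apply Measurable.ite
  · exact measurableSet_eq_fun (Bv_measurable hC) (Av_measurable hC)
  · exact measurable_const
  · exact (measurable_id.sub (Av_measurable hC)).div
      ((Bv_measurable hC).sub (Av_measurable hC))

lemma Alv_mem (hC : IsCopula C) {v : ℝ} (hv : v ∈ Icc (0:ℝ) 1) : Alv C v ∈ Icc (0:ℝ) 1 := by
  unfold Alv
  split_ifs with h
  · exact ⟨le_refl 0, zero_le_one⟩
  · have hAB : Av C v < Bv C v := lt_of_le_of_ne (Av_le_Bv v) (Ne.symm h)
    constructor
    · exact div_nonneg (by linarith [Av_le hC hv]) (by linarith)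
    · rw [div_le_one (by linarith)]
      linarith [le_Bv hC hv]

end E


section F
variable {C : ℝ → ℝ → ℝ}

def phiv (C : ℝ → ℝ → ℝ) (v : ℝ) : ℝ := ∫ t in (0:ℝ)..1, (Hv C v t)^2

lemma bdd_integrableOn {f : ℝ → ℝ} {M : ℝ} (hm : Measurable f) (hb : ∀ t, |f t| ≤ M)
    {s : Set ℝ} (hs : s ⊆ Icc (0:ℝ) 1) : IntegrableOn f s := by
  apply Measure.integrableOn_of_bounded ((measure_mono hs).trans_lt (by simp)).ne
    hm.aestronglyMeasurable
  exact Eventually.of_forall fun t => by simpa [Real.norm_eq_abs] using hb t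

lemma ae_ne_one : ∀ᵐ t : ℝ, t ≠ (1:ℝ) := by
  rw [ae_iff]
  have : {t : ℝ | ¬ t ≠ 1} = {1} := by ext t; simp
  rw [this]
  exact Real.volume_singleton

lemma phiv_eq_d1 (v : ℝ) : (∫ t in (0:ℝ)..1, (d1 C t v)^2) = phiv C v := by
  apply intervalIntegral.integral_congr_ae
  filter_upwards [ae_ne_one] with t ht hmem
  rw [uIoc_of_le zero_le_one] at hmem
  rw [Hv_eq_d1 v ⟨hmem.1, lt_of_le_of_ne hmem.2 ht⟩]

lemma Hv_abs_le (hC : IsCopula C) {v : ℝ} (hv : v ∈ Icc (0:ℝ) 1) (t : ℝ) : |Hv C v t| ≤ 1 := by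
  have h := Hv_mem hC hv t
  rw [abs_le]; exact ⟨by linarith [h.1], h.2⟩

lemma Hv_sq_abs_le (hC : IsCopula C) {v : ℝ} (hv : v ∈ Icc (0:ℝ) 1) (t : ℝ) :
    |(Hv C v t)^2| ≤ 1 := by
  have h := Hv_mem hC hv t
  rw [abs_of_nonneg (sq_nonneg _)]
  calc (Hv C v t)^2 ≤ 1^2 := pow_le_pow_left₀ h.1 h.2 2
    _ = 1 := one_pow 2

lemma Hv_sq_intervalIntegrable (hC : IsCopula C) {v : ℝ} (hv : v ∈ Icc (0:ℝ) 1) :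
    IntervalIntegrable (fun t => (Hv C v t)^2) volume 0 1 := by
  rw [intervalIntegrable_iff_integrableOn_Ioc_of_le zero_le_one]
  exact bdd_integrableOn ((Hv_meas v).pow_const 2) (Hv_sq_abs_le hC hv) Ioc_subset_Icc_self

lemma phiv_monoOn (hC : IsCopula C) : MonotoneOn (phiv C) (Icc (0:ℝ) 1) := by
  intro v hv v' hv' hvv
  apply intervalIntegral.integral_mono_ae zero_le_one (Hv_sq_intervalIntegrable hC hv)
    (Hv_sq_intervalIntegrable hC hv')
  filter_upwards [Hv_mono_ae hC hv hv' hvv] with t ht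
  exact pow_le_pow_left₀ (Hv_mem hC hv t).1 ht 2

lemma phiv_eq_setint (v : ℝ) : phiv C v = ∫ t in Icc (0:ℝ) 1, (Hv C v t)^2 := by
  rw [phiv, intervalIntegral.integral_of_le zero_le_one, integral_Icc_eq_integral_Ioc]

lemma ind_eq_indicator (v : ℝ) :
    (fun t : ℝ => if t < v then (1:ℝ) else 0) = (Iio v).indicator (fun _ => (1:ℝ)) := by
  funext t
  simp [indicator, mem_Iio]

lemma Icc_inter_Iio {v : ℝ} (hv : v ∈ Icc (0:ℝ) 1) : Icc (0:ℝ) 1 ∩ Iio v = Ico 0 v := by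
  ext t
  constructor
  · rintro ⟨⟨h0, _⟩, h2⟩; exact ⟨h0, h2⟩
  · rintro ⟨h0, h2⟩; exact ⟨⟨h0, le_trans (le_of_lt h2) hv.2⟩, h2⟩

lemma int_I3 {v : ℝ} (hv : v ∈ Icc (0:ℝ) 1) :
    ∫ t in Icc (0:ℝ) 1, (if t < v then (1:ℝ) else 0) = v := by
  rw [ind_eq_indicator, setIntegral_indicator measurableSet_Iio, Icc_inter_Iio hv,
    setIntegral_const, smul_eq_mul, mul_one, Measure.real, Real.volume_Ico, sub_zero,
    ENNReal.toReal_ofReal hv.1]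

lemma int_I1 (hC : IsCopula C) {v : ℝ} (hv : v ∈ Icc (0:ℝ) 1) :
    ∫ t in Icc (0:ℝ) 1, Hv C v t * (if t < v then (1:ℝ) else 0) = C v v := by
  have heq : (fun t : ℝ => Hv C v t * (if t < v then (1:ℝ) else 0))
      = (Iio v).indicator (Hv C v) := by
    funext t
    by_cases h : t < v <;> simp [indicator, mem_Iio, h]
  rw [heq, setIntegral_indicator measurableSet_Iio, Icc_inter_Iio hv,
    ← integral_Icc_eq_integral_Ico]
  exact Hv_setint0v hC hv

lemma cheb_identity (hC : IsCopula C) {v : ℝ} (hv : v ∈ Icc (0:ℝ) 1) (c : ℝ) :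
    ∫ t in Icc (0:ℝ) 1, (Hv C v t - c) * ((if t < v then (1:ℝ) else 0) - Hv C v t)
      = C v v - phiv C v := by
  have hImeas : Measurable (fun t : ℝ => if t < v then (1:ℝ) else 0) :=
    Measurable.ite measurableSet_Iio measurable_const measurable_const
  have hIabs : ∀ t : ℝ, |if t < v then (1:ℝ) else 0| ≤ 1 := by
    intro t; split_ifs <;> norm_num
  have if1 : IntegrableOn (fun t => Hv C v t * (if t < v then (1:ℝ) else 0)) (Icc (0:ℝ) 1) := by
    apply bdd_integrableOn ((Hv_meas v).mul hImeas) (M := 1) ?_ (subset_refl _)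
    intro t
    rw [Pi.mul_apply, abs_mul]
    calc |Hv C v t| * |if t < v then (1:ℝ) else 0| ≤ 1 * 1 :=
          mul_le_mul (Hv_abs_le hC hv t) (hIabs t) (abs_nonneg _) zero_le_one
      _ = 1 := mul_one 1
  have if2 : IntegrableOn (fun t => (Hv C v t)^2) (Icc (0:ℝ) 1) :=
    bdd_integrableOn ((Hv_meas v).pow_const 2) (Hv_sq_abs_le hC hv) (subset_refl _)
  have if3 : IntegrableOn (fun t => c * (if t < v then (1:ℝ) else 0)) (Icc (0:ℝ) 1) := by
    apply bdd_integrableOn (measurable_const.mul hImeas) (M := |c|) ?_ (subset_refl _)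
    intro t
    rw [Pi.mul_apply, abs_mul]
    calc |c| * |if t < v then (1:ℝ) else 0| ≤ |c| * 1 :=
          mul_le_mul_of_nonneg_left (hIabs t) (abs_nonneg c)
      _ = |c| := mul_one _
  have if4 : IntegrableOn (fun t => c * Hv C v t) (Icc (0:ℝ) 1) := by
    apply bdd_integrableOn (measurable_const.mul (Hv_meas v)) (M := |c|) ?_ (subset_refl _)
    intro t
    rw [Pi.mul_apply, abs_mul]
    calc |c| * |Hv C v t| ≤ |c| * 1 :=
          mul_le_mul_of_nonneg_left (Hv_abs_le hC hv t) (abs_nonneg c)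
      _ = |c| := mul_one _
  have hexp : (fun t => (Hv C v t - c) * ((if t < v then (1:ℝ) else 0) - Hv C v t))
      = fun t => (Hv C v t * (if t < v then (1:ℝ) else 0) - (Hv C v t)^2
          - c * (if t < v then (1:ℝ) else 0)) + c * Hv C v t := by
    funext t; ring
  have iA : IntegrableOn (fun t => Hv C v t * (if t < v then (1:ℝ) else 0) - (Hv C v t)^2)
      (Icc (0:ℝ) 1) := if1.sub if2
  have iB : IntegrableOn (fun t => Hv C v t * (if t < v then (1:ℝ) else 0) - (Hv C v t)^2
      - c * (if t < v then (1:ℝ) else 0)) (Icc (0:ℝ) 1) := iA.sub if3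
  rw [hexp, integral_add iB if4, integral_sub iA if3, integral_sub if1 if2,
    int_I1 hC hv, ← phiv_eq_setint, integral_const_mul, integral_const_mul, int_I3 hv,
    Hv_setint hC hv]
  ring

end F


section G
variable {C : ℝ → ℝ → ℝ}

lemma ind_Ioo_eq_indicator (a b : ℝ) :
    (fun t : ℝ => if t ∈ Ioo a b then (1:ℝ) else 0) = (Ioo a b).indicator (fun _ => (1:ℝ)) := by
  funext t
  simp [indicator]

lemma ind_meas (a b : ℝ) : Measurable (fun t : ℝ => if t ∈ Ioo a b then (1:ℝ) else 0) :=
  Measurable.ite measurableSet_Ioo measurable_const measurable_const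

lemma ind_Iio_meas (a : ℝ) : Measurable (fun t : ℝ => if t < a then (1:ℝ) else 0) :=
  Measurable.ite measurableSet_Iio measurable_const measurable_const

lemma int_ind_Ioo {a b : ℝ} (ha : a ∈ Icc (0:ℝ) 1) (hb : b ∈ Icc (0:ℝ) 1) :
    ∫ t in Icc (0:ℝ) 1, (if t ∈ Ioo a b then (1:ℝ) else 0) = max (b - a) 0 := by
  have hsub : Ioo a b ⊆ Icc (0:ℝ) 1 := fun t ht => ⟨ha.1.trans ht.1.le, ht.2.le.trans hb.2⟩
  rw [ind_Ioo_eq_indicator, setIntegral_indicator measurableSet_Ioo,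
    inter_eq_self_of_subset_right hsub, setIntegral_const, smul_eq_mul, mul_one,
    Measure.real, Real.volume_Ioo, ENNReal.toReal_ofReal']

/-- Integral of a two-step function over `[0,1]`. -/
lemma int_step {a b c : ℝ} (ha : a ∈ Icc (0:ℝ) 1) (hb : b ∈ Icc (0:ℝ) 1) :
    ∫ t in Icc (0:ℝ) 1, ((if t < a then (1:ℝ) else 0)
        + c * (if t ∈ Ioo a b then (1:ℝ) else 0)) = a + c * max (b - a) 0 := by
  have i1 : IntegrableOn (fun t : ℝ => if t < a then (1:ℝ) else 0) (Icc (0:ℝ) 1) := by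
    apply bdd_integrableOn (ind_Iio_meas a) (M := 1) ?_ (subset_refl _)
    intro t; split_ifs <;> norm_num
  have i2 : IntegrableOn (fun t : ℝ => c * (if t ∈ Ioo a b then (1:ℝ) else 0)) (Icc (0:ℝ) 1) := by
    apply bdd_integrableOn (measurable_const.mul (ind_meas a b)) (M := |c|) ?_ (subset_refl _)
    intro t
    rw [Pi.mul_apply, abs_mul]
    split_ifs <;> simp
  rw [integral_add i1 i2, int_I3 ha, integral_const_mul, int_ind_Ioo ha hb]

lemma step_sq {a b c t : ℝ} :
    ((if t < a then (1:ℝ) else 0) + c * (if t ∈ Ioo a b then (1:ℝ) else 0))^2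
      = (if t < a then (1:ℝ) else 0) + c^2 * (if t ∈ Ioo a b then (1:ℝ) else 0) := by
  by_cases h1 : t < a
  · have h2 : t ∉ Ioo a b := fun hm => absurd h1 (not_lt.mpr hm.1.le)
    simp [h1, h2]
  · by_cases h2 : t ∈ Ioo a b
    · simp only [h1, if_false, h2, if_true, mul_one, zero_add]
    · simp [h1, h2]

lemma vol_inter_Ioo {v a b : ℝ} (ha0 : 0 ≤ a) (hav : a ≤ v) (hvb : v ≤ b) :
    volume (Icc (0:ℝ) v ∩ Ioo a b) = ENNReal.ofReal (v - a) := by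
  apply le_antisymm
  · have hsub : Icc (0:ℝ) v ∩ Ioo a b ⊆ Icc a v := by
      rintro t ⟨⟨_, h2⟩, h3, _⟩
      exact ⟨h3.le, h2⟩
    refine (measure_mono hsub).trans_eq ?_
    rw [Real.volume_Icc]
  · have hsub : Ioo a v ⊆ Icc (0:ℝ) v ∩ Ioo a b := by
      rintro t ⟨h1, h2⟩
      exact ⟨⟨ha0.trans h1.le, h2.le⟩, h1, h2.trans_le hvb⟩
    refine le_trans ?_ (measure_mono hsub)
    rw [Real.volume_Ioo]

lemma Icc_inter_Iio' {v a : ℝ} (hav : a ≤ v) :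
    Icc (0:ℝ) v ∩ Iio a = Ico 0 a := by
  ext t
  constructor
  · rintro ⟨⟨h0, _⟩, h2⟩; exact ⟨h0, h2⟩
  · rintro ⟨h0, h2⟩; exact ⟨⟨h0, (le_of_lt h2).trans hav⟩, h2⟩

/-- Integral of a two-step function over `[0,v]` when `a ≤ v ≤ b`. -/
lemma int_step_lower {v a b c : ℝ} (ha : a ∈ Icc (0:ℝ) 1) (hav : a ≤ v) (hvb : v ≤ b)
    (hv : v ∈ Icc (0:ℝ) 1) :
    ∫ t in Icc (0:ℝ) v, ((if t < a then (1:ℝ) else 0)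
        + c * (if t ∈ Ioo a b then (1:ℝ) else 0)) = a + c * (v - a) := by
  have hsub01 : Icc (0:ℝ) v ⊆ Icc (0:ℝ) 1 := Icc_subset_Icc le_rfl hv.2
  have i1 : IntegrableOn (fun t : ℝ => if t < a then (1:ℝ) else 0) (Icc (0:ℝ) v) := by
    apply bdd_integrableOn (ind_Iio_meas a) (M := 1) ?_ hsub01
    intro t; split_ifs <;> norm_num
  have i2 : IntegrableOn (fun t : ℝ => c * (if t ∈ Ioo a b then (1:ℝ) else 0)) (Icc (0:ℝ) v) := by
    apply bdd_integrableOn (measurable_const.mul (ind_meas a b)) (M := |c|) ?_ hsub01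
    intro t
    rw [Pi.mul_apply, abs_mul]
    split_ifs <;> simp
  rw [integral_add i1 i2]
  have e1 : ∫ t in Icc (0:ℝ) v, (if t < a then (1:ℝ) else 0) = a := by
    rw [show (fun t : ℝ => if t < a then (1:ℝ) else 0) = (Iio a).indicator (fun _ => (1:ℝ))
      from by funext t; simp [indicator, mem_Iio],
      setIntegral_indicator measurableSet_Iio, Icc_inter_Iio' hav, setIntegral_const,
      smul_eq_mul, mul_one, Measure.real, Real.volume_Ico, sub_zero, ENNReal.toReal_ofReal ha.1]
  have e2 : ∫ t in Icc (0:ℝ) v, c * (if t ∈ Ioo a b then (1:ℝ) else 0) = c * (v - a) := by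
    rw [integral_const_mul, ind_Ioo_eq_indicator, setIntegral_indicator measurableSet_Ioo,
      setIntegral_const, smul_eq_mul, mul_one, Measure.real, vol_inter_Ioo ha.1 hav hvb,
      ENNReal.toReal_ofReal (by linarith)]
  rw [e1, e2]

/-- The level-set bound for antitone functions. -/
lemma antitone_level {g : ℝ → ℝ} (hga : AntitoneOn g (Icc (0:ℝ) 1)) {U : Set ℝ}
    (hU : ∀ x y : ℝ, x ≤ y → x ∈ U → y ∈ U) {t : ℝ} (ht : t ∈ Icc (0:ℝ) 1) :
    (t < (volume (Icc (0:ℝ) 1 ∩ {s | g s ∈ U})).toReal → g t ∈ U) ∧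
    ((volume (Icc (0:ℝ) 1 ∩ {s | g s ∈ U})).toReal < t → g t ∉ U) := by
  set S := Icc (0:ℝ) 1 ∩ {s | g s ∈ U} with hS
  constructor
  · intro hlt
    by_contra hgt
    have hsub : S ⊆ Ico 0 t := by
      rintro s ⟨hsI, hsU⟩
      refine ⟨hsI.1, ?_⟩
      by_contra hst
      push_neg at hst
      exact hgt (hU _ _ (hga ht hsI hst) hsU)
    have h2 := ENNReal.toReal_mono (by rw [Real.volume_Ico]; exact ENNReal.ofReal_ne_top)
      (measure_mono hsub)
    rw [Real.volume_Ico, sub_zero, ENNReal.toReal_ofReal ht.1] at h2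
    linarith
  · intro hlt hgt
    have hsub : Icc 0 t ⊆ S := by
      intro s hs
      have hsI : s ∈ Icc (0:ℝ) 1 := ⟨hs.1, hs.2.trans ht.2⟩
      exact ⟨hsI, hU _ _ (hga hsI ht hs.2) hgt⟩
    have h2 : ENNReal.ofReal t ≤ volume S := by
      rw [← sub_zero t, ← Real.volume_Icc]
      exact measure_mono hsub
    have hfin : volume S ≠ ⊤ :=
      ((measure_mono (inter_subset_left)).trans_lt (by simp)).ne
    have h3 := ENNReal.toReal_mono hfin h2
    rw [ENNReal.toReal_ofReal ht.1] at h3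
    linarith

end G


section H
variable {C : ℝ → ℝ → ℝ}

lemma ae_ne (c : ℝ) : ∀ᵐ t : ℝ, t ≠ c := by
  rw [ae_iff]
  have : {t : ℝ | ¬ t ≠ c} = {c} := by ext t; simp
  rw [this]
  exact Real.volume_singleton

lemma ae_ne_restrict (c : ℝ) {s : Set ℝ} : ∀ᵐ t ∂(volume.restrict s), t ≠ c :=
  ae_mono Measure.restrict_le_self (ae_ne c)

lemma d1_eq_Hv_ae (v : ℝ) :
    ∀ᵐ t ∂(volume.restrict (Icc (0:ℝ) 1)), d1 C t v = Hv C v t := by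
  filter_upwards [ae_restrict_mem measurableSet_Icc, ae_ne_restrict (0:ℝ),
    ae_ne_restrict (1:ℝ)] with t htI h0 h1
  exact (Hv_eq_d1 v ⟨lt_of_le_of_ne htI.1 (Ne.symm h0), lt_of_le_of_ne htI.2 h1⟩).symm

lemma cheb_main (hC : IsCopula C) {v : ℝ} (hv : v ∈ Icc (0:ℝ) 1) {g : ℝ → ℝ}
    (hga : AntitoneOn g (Icc (0:ℝ) 1))
    (hg : ∀ᵐ t ∂(volume.restrict (Icc (0:ℝ) 1)), Hv C v t = g t) :
    0 ≤ C v v - phiv C v ∧ (C v v - phiv C v = 0 →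
      ∀ᵐ t ∂(volume.restrict (Icc (0:ℝ) 1)),
        (Hv C v t - g v) * ((if t < v then (1:ℝ) else 0) - Hv C v t) = 0) := by
  have hnn : ∀ᵐ t ∂(volume.restrict (Icc (0:ℝ) 1)),
      0 ≤ (Hv C v t - g v) * ((if t < v then (1:ℝ) else 0) - Hv C v t) := by
    filter_upwards [hg, ae_restrict_mem measurableSet_Icc] with t hgt htI
    rcases lt_trichotomy t v with h | h | h
    · rw [if_pos h]
      apply mul_nonneg
      · rw [hgt]
        linarith [hga htI hv h.le]
      · linarith [(Hv_mem hC hv t).2]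
    · subst h
      rw [hgt, sub_self, zero_mul]
    · rw [if_neg (not_lt.mpr h.le)]
      have h1 : Hv C v t - g v ≤ 0 := by
        rw [hgt]
        linarith [hga hv htI h.le]
      have h2 : 0 - Hv C v t ≤ 0 := by
        linarith [(Hv_mem hC hv t).1]
      nlinarith
  have hid := cheb_identity hC hv (g v)
  refine ⟨by rw [← hid]; exact integral_nonneg_of_ae hnn, fun h0 => ?_⟩
  have hint : Integrable (fun t => (Hv C v t - g v) * ((if t < v then (1:ℝ) else 0) - Hv C v t))
      (volume.restrict (Icc (0:ℝ) 1)) := by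
    apply bdd_integrableOn (M := (1 + |g v|) * 2)
      (((Hv_meas v).sub measurable_const).mul ((ind_Iio_meas v).sub (Hv_meas v)))
      ?_ (subset_refl _)
    intro t
    rw [Pi.mul_apply, abs_mul]
    have h1 : |Hv C v t - g v| ≤ 1 + |g v| := by
      calc |Hv C v t - g v| ≤ |Hv C v t| + |g v| := abs_sub _ _
        _ ≤ 1 + |g v| := by linarith [Hv_abs_le hC hv t]
    have h2 : |(if t < v then (1:ℝ) else 0) - Hv C v t| ≤ 2 := by
      have ha := Hv_abs_le hC hv t
      have hb : |if t < v then (1:ℝ) else 0| ≤ 1 := by split_ifs <;> norm_num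
      calc |(if t < v then (1:ℝ) else 0) - Hv C v t|
          ≤ |if t < v then (1:ℝ) else 0| + |Hv C v t| := abs_sub _ _
        _ ≤ 2 := by linarith
    exact mul_le_mul h1 h2 (abs_nonneg _) (by positivity)
  have hz := (integral_eq_zero_iff_of_nonneg_ae hnn hint).mp (by rw [hid, h0])
  filter_upwards [hz] with t ht
  simpa using ht

lemma structure_ae (hC : IsCopula C) {v : ℝ} (hv : v ∈ Icc (0:ℝ) 1) {g : ℝ → ℝ}
    (hga : AntitoneOn g (Icc (0:ℝ) 1))
    (hg : ∀ᵐ t ∂(volume.restrict (Icc (0:ℝ) 1)), Hv C v t = g t)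
    (hzero : ∀ᵐ t ∂(volume.restrict (Icc (0:ℝ) 1)),
      (Hv C v t - g v) * ((if t < v then (1:ℝ) else 0) - Hv C v t) = 0) :
    ∀ᵐ t ∂(volume.restrict (Icc (0:ℝ) 1)),
      Hv C v t = (if t < Av C v then (1:ℝ) else 0)
        + Alv C v * (if t ∈ Ioo (Av C v) (Bv C v) then (1:ℝ) else 0) := by
  have hcl : clamp01 v = v := clamp01_eq hv
  have himp := (ae_restrict_iff' measurableSet_Icc).mp hg
  -- identify level-set measures
  have hA : (volume (Icc (0:ℝ) 1 ∩ {s | g s ∈ Ici 1})).toReal = Av C v := by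
    rw [Av, hcl]
    congr 1
    apply measure_congr
    rw [Filter.eventuallyEq_set]
    filter_upwards [himp] with t ht
    constructor
    · rintro ⟨h1, h2⟩
      refine ⟨h1, ?_⟩
      have h2' : (1:ℝ) ≤ g t := h2
      show (1:ℝ) ≤ Hv C v t
      rw [ht h1]
      exact h2'
    · rintro ⟨h1, h2⟩
      refine ⟨h1, ?_⟩
      have h2' : (1:ℝ) ≤ Hv C v t := h2
      show g t ∈ Ici (1:ℝ)
      rw [mem_Ici, ← ht h1]
      exact h2'
  have hB : (volume (Icc (0:ℝ) 1 ∩ {s | g s ∈ Ioi 0})).toReal = Bv C v := by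
    rw [Bv, hcl]
    congr 1
    apply measure_congr
    rw [Filter.eventuallyEq_set]
    filter_upwards [himp] with t ht
    constructor
    · rintro ⟨h1, h2⟩
      refine ⟨h1, ?_⟩
      have h2' : (0:ℝ) < g t := h2
      show (0:ℝ) < Hv C v t
      rw [ht h1]
      exact h2'
    · rintro ⟨h1, h2⟩
      refine ⟨h1, ?_⟩
      have h2' : (0:ℝ) < Hv C v t := h2
      show g t ∈ Ioi (0:ℝ)
      rw [mem_Ioi, ← ht h1]
      exact h2'
  have claimA : ∀ t ∈ Icc (0:ℝ) 1,
      (t < Av C v → 1 ≤ g t) ∧ (Av C v < t → ¬ (1 ≤ g t)) := by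
    intro t ht
    have := antitone_level hga (U := Ici 1) (fun x y hxy hx => le_trans hx hxy) ht
    rw [hA] at this
    exact this
  have claimB : ∀ t ∈ Icc (0:ℝ) 1,
      (t < Bv C v → 0 < g t) ∧ (Bv C v < t → ¬ (0 < g t)) := by
    intro t ht
    have := antitone_level hga (U := Ioi 0) (fun x y hxy hx => lt_of_lt_of_le hx hxy) ht
    rw [hB] at this
    exact this
  have hab : Av C v ≤ Bv C v := Av_le_Bv v
  -- structure with middle value g v
  have hstep : ∀ᵐ t ∂(volume.restrict (Icc (0:ℝ) 1)),
      Hv C v t = (if t < Av C v then (1:ℝ) else 0)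
        + g v * (if t ∈ Ioo (Av C v) (Bv C v) then (1:ℝ) else 0) := by
    filter_upwards [hg, hzero, ae_restrict_mem measurableSet_Icc,
      ae_ne_restrict (Av C v), ae_ne_restrict (Bv C v)] with t hgt hz htI hta htb
    have hmem := Hv_mem hC hv t
    rcases lt_trichotomy t (Av C v) with h1 | h1 | h1
    · have hg1 : 1 ≤ g t := ((claimA t htI).1) h1
      have hio : t ∉ Ioo (Av C v) (Bv C v) := fun hm => absurd h1 (not_lt.mpr hm.1.le)
      rw [if_pos h1, if_neg hio, mul_zero, add_zero]
      rw [hgt]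
      rw [hgt] at hmem
      linarith [hmem.2]
    · exact absurd h1 hta
    · rcases lt_trichotomy t (Bv C v) with h2 | h2 | h2
      · have hgl : g t < 1 := not_le.mp ((claimA t htI).2 h1)
        have hgp : 0 < g t := (claimB t htI).1 h2
        have hio : t ∈ Ioo (Av C v) (Bv C v) := ⟨h1, h2⟩
        rw [if_neg (not_lt.mpr h1.le), if_pos hio, mul_one, zero_add]
        rcases mul_eq_zero.mp hz with hz1 | hz2
        · rw [hgt]; rw [hgt] at hz1; linarith
        · exfalso
          rw [hgt] at hz2
          split_ifs at hz2 <;> linarith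
      · exact absurd h2 htb
      · have hgn : ¬ (0 < g t) := (claimB t htI).2 h2
        have hio : t ∉ Ioo (Av C v) (Bv C v) := fun hm => absurd h2 (not_lt.mpr hm.2.le)
        rw [if_neg (not_lt.mpr (le_trans hab h2.le)), if_neg hio, mul_zero, add_zero]
        rw [hgt]
        rw [hgt] at hmem
        linarith [hmem.1, not_lt.mp hgn]
  -- integrate the step to identify g v with Alv when the middle interval is nonempty
  have heq : v = Av C v + g v * max (Bv C v - Av C v) 0 := by
    have heq' : ∫ t in Icc (0:ℝ) 1, Hv C v t
        = Av C v + g v * max (Bv C v - Av C v) 0 := by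
      rw [integral_congr_ae hstep, int_step (Av_mem v) (Bv_mem v)]
    rw [← heq']
    exact (Hv_setint hC hv).symm
  filter_upwards [hstep] with t hst
  rw [hst]
  by_cases hm : t ∈ Ioo (Av C v) (Bv C v)
  · have habs : Av C v < Bv C v := hm.1.trans hm.2
    have hne : Bv C v ≠ Av C v := ne_of_gt habs
    have hmax : max (Bv C v - Av C v) 0 = Bv C v - Av C v := max_eq_left (by linarith)
    rw [hmax] at heq
    have hgv : g v = (v - Av C v) / (Bv C v - Av C v) := by
      rw [eq_div_iff (by linarith : Bv C v - Av C v ≠ 0)]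
      linarith
    rw [if_pos hm, mul_one, mul_one, Alv, if_neg hne, hgv]
  · rw [if_neg hm, mul_zero, mul_zero]

end H


section I
variable {C : ℝ → ℝ → ℝ}

lemma backward_per_v (hC : IsCopula C) {v : ℝ} (hv : v ∈ Icc (0:ℝ) 1) {a b al : ℝ}
    (ha : a ∈ Icc (0:ℝ) 1) (hb : b ∈ Icc (0:ℝ) 1) (hal : al ∈ Icc (0:ℝ) 1)
    (hstep : ∀ᵐ t ∂(volume.restrict (Icc (0:ℝ) 1)),
      Hv C v t = (if t < a then (1:ℝ) else 0) + al * (if t ∈ Ioo a b then (1:ℝ) else 0)) :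
    C v v = phiv C v := by
  have heq : v = a + al * max (b - a) 0 := by
    have heq' : ∫ t in Icc (0:ℝ) 1, Hv C v t = a + al * max (b - a) 0 := by
      rw [integral_congr_ae hstep, int_step ha hb]
    rw [← heq']
    exact (Hv_setint hC hv).symm
  have hphi : phiv C v = a + al^2 * max (b - a) 0 := by
    rw [phiv_eq_setint]
    have hsq : ∀ᵐ t ∂(volume.restrict (Icc (0:ℝ) 1)),
        (Hv C v t)^2 = (if t < a then (1:ℝ) else 0) + al^2 * (if t ∈ Ioo a b then (1:ℝ) else 0) := by
      filter_upwards [hstep] with t ht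
      rw [ht, step_sq]
    rw [integral_congr_ae hsq, int_step ha hb]
  have hCvv : C v v = ∫ t in Icc (0:ℝ) v, Hv C v t := (Hv_setint0v hC hv).symm
  have hstep' : ∀ᵐ t ∂(volume.restrict (Icc (0:ℝ) v)),
      Hv C v t = (if t < a then (1:ℝ) else 0) + al * (if t ∈ Ioo a b then (1:ℝ) else 0) :=
    ae_restrict_of_ae_restrict_of_subset (Icc_subset_Icc le_rfl hv.2) hstep
  rcases le_or_gt b a with hba | hab
  · -- middle interval empty; v = a
    have hmax : max (b - a) 0 = 0 := max_eq_right (by linarith)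
    have hva : v = a := by rw [heq, hmax, mul_zero, add_zero]
    have hIoo : Ioo a b = ∅ := Ioo_eq_empty (not_lt.mpr hba)
    have hstep0 : ∀ᵐ t ∂(volume.restrict (Icc (0:ℝ) v)),
        Hv C v t = (if t < a then (1:ℝ) else 0) := by
      filter_upwards [hstep'] with t ht
      rw [ht]
      simp [hIoo]
    rw [hCvv, integral_congr_ae hstep0]
    have e1 : ∫ t in Icc (0:ℝ) v, (if t < a then (1:ℝ) else 0) = a := by
      rw [show (fun t : ℝ => if t < a then (1:ℝ) else 0) = (Iio a).indicator (fun _ => (1:ℝ))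
        from by funext t; simp [indicator, mem_Iio],
        setIntegral_indicator measurableSet_Iio, Icc_inter_Iio' (le_of_eq hva.symm),
        setIntegral_const, smul_eq_mul, mul_one, Measure.real, Real.volume_Ico, sub_zero,
        ENNReal.toReal_ofReal ha.1]
    rw [e1, hphi, hmax, mul_zero, add_zero]
  · have hmax : max (b - a) 0 = b - a := max_eq_left (by linarith)
    rw [hmax] at heq
    have hva : a ≤ v := by
      have : 0 ≤ al * (b - a) := mul_nonneg hal.1 (by linarith)
      linarith [heq]
    have hvb : v ≤ b := by
      have : al * (b - a) ≤ 1 * (b - a) := mul_le_mul_of_nonneg_right hal.2 (by linarith)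
      rw [one_mul] at this
      linarith [heq]
    rw [hCvv, integral_congr_ae hstep', int_step_lower ha hva hvb hv, hphi, hmax]
    have hval : v - a = al * (b - a) := by linarith [heq]
    rw [hval]
    ring
end I


section J
variable {C : ℝ → ℝ → ℝ}

lemma cop_mono2 (hC : IsCopula C) {u : ℝ} (hu : u ∈ Icc (0:ℝ) 1) {v v' : ℝ}
    (hv : v ∈ Icc (0:ℝ) 1) (hv' : v' ∈ Icc (0:ℝ) 1) (hvv : v ≤ v') : C u v ≤ C u v' := by
  have h4 := hC.2.2.2 0 ⟨le_refl 0, zero_le_one⟩ u hu v hv v' hv' hu.1 hvv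
  have e1 := (hC.2.2.1 v hv).1
  have e2 := (hC.2.2.1 v' hv').1
  linarith

lemma Cdiag_monoOn (hC : IsCopula C) : MonotoneOn (fun v => C v v) (Icc (0:ℝ) 1) := by
  intro v hv v' hv' hvv
  calc C v v ≤ C v' v := cop_mono hC hv hv hv' hvv
    _ ≤ C v' v' := cop_mono2 hC hv' hv hv' hvv

lemma Cdiag_ii (hC : IsCopula C) : IntervalIntegrable (fun v => C v v) volume 0 1 := by
  apply MonotoneOn.intervalIntegrable
  rw [uIcc_of_le zero_le_one]
  exact Cdiag_monoOn hC

lemma phiv_ii (hC : IsCopula C) : IntervalIntegrable (phiv C) volume 0 1 := by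
  apply MonotoneOn.intervalIntegrable
  rw [uIcc_of_le zero_le_one]
  exact phiv_monoOn hC

lemma xi_eq : xi C = 6 * (∫ v in (0:ℝ)..1, phiv C v) - 2 := by
  unfold xi
  congr 1
  congr 1
  exact intervalIntegral.integral_congr fun v _ => phiv_eq_d1 v

theorem si_equality_structure' (hC : IsCopula C) (hSI : IsSI C) :
    xi C = psi C ↔
      ∃ A B α : ℝ → ℝ,
        Measurable A ∧ Measurable B ∧ Measurable α ∧
        MonotoneOn A (Icc (0:ℝ) 1) ∧ MonotoneOn B (Icc (0:ℝ) 1) ∧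
        (∀ v ∈ Icc (0:ℝ) 1, A v ∈ Icc (0:ℝ) 1 ∧ B v ∈ Icc (0:ℝ) 1 ∧ α v ∈ Icc (0:ℝ) 1) ∧
        (∀ᵐ v ∂(volume.restrict (Icc (0:ℝ) 1)),
          ∀ᵐ t ∂(volume.restrict (Icc (0:ℝ) 1)),
            d1 C t v =
              (if t < A v then (1:ℝ) else 0) +
                α v * (if t ∈ Ioo (A v) (B v) then (1:ℝ) else 0)) := by
  have hiff : (xi C = psi C) ↔ (∫ v in (0:ℝ)..1, phiv C v) = ∫ v in (0:ℝ)..1, C v v := by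
    rw [xi_eq]
    unfold psi
    constructor <;> intro h <;> linarith
  rw [hiff]
  constructor
  · intro hxi
    -- a.e. equality of the diagonal and the inner integral
    have hDnn : ∀ v ∈ Icc (0:ℝ) 1, 0 ≤ C v v - phiv C v := by
      intro v hv
      obtain ⟨g, hga, hg⟩ := hSI v hv
      have hHg : ∀ᵐ t ∂(volume.restrict (Icc (0:ℝ) 1)), Hv C v t = g t := by
        filter_upwards [hg, d1_eq_Hv_ae v] with t h1 h2
        rw [← h2, h1]
      exact (cheb_main hC hv hga hHg).1
    have hii : IntervalIntegrable (fun v => C v v - phiv C v) volume 0 1 :=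
      (Cdiag_ii hC).sub (phiv_ii hC)
    have hint0 : ∫ v in Ioc (0:ℝ) 1, (C v v - phiv C v) = 0 := by
      rw [← intervalIntegral.integral_of_le zero_le_one,
        intervalIntegral.integral_sub (Cdiag_ii hC) (phiv_ii hC), hxi, sub_self]
    have hIntOn : IntegrableOn (fun v => C v v - phiv C v) (Ioc (0:ℝ) 1) := by
      rw [intervalIntegrable_iff_integrableOn_Ioc_of_le zero_le_one] at hii
      exact hii
    have hnnae : 0 ≤ᵐ[volume.restrict (Ioc (0:ℝ) 1)] fun v => C v v - phiv C v := by
      filter_upwards [ae_restrict_mem measurableSet_Ioc] with v hv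
      exact hDnn v (Ioc_subset_Icc_self hv)
    have hD0 := (integral_eq_zero_iff_of_nonneg_ae hnnae hIntOn).mp hint0
    have hD0' : ∀ᵐ v ∂(volume.restrict (Icc (0:ℝ) 1)), C v v - phiv C v = 0 := by
      have h1 := (ae_restrict_iff' measurableSet_Ioc).mp hD0
      filter_upwards [ae_mono Measure.restrict_le_self h1,
        ae_restrict_mem measurableSet_Icc, ae_ne_restrict (0:ℝ)] with v himp hvI h0
      have := himp ⟨lt_of_le_of_ne hvI.1 (Ne.symm h0), hvI.2⟩
      simpa using this
    refine ⟨Av C, Bv C, Alv C, Av_measurable hC, Bv_measurable hC, Alv_measurable hC,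
      ((Av_mono hC).monotoneOn _), ((Bv_mono hC).monotoneOn _),
      fun v hv => ⟨Av_mem v, Bv_mem v, Alv_mem hC hv⟩, ?_⟩
    filter_upwards [hD0', ae_restrict_mem measurableSet_Icc] with v hDv hvI
    obtain ⟨g, hga, hg⟩ := hSI v hvI
    have hHg : ∀ᵐ t ∂(volume.restrict (Icc (0:ℝ) 1)), Hv C v t = g t := by
      filter_upwards [hg, d1_eq_Hv_ae v] with t h1 h2
      rw [← h2, h1]
    have hzero := (cheb_main hC hvI hga hHg).2 hDv
    have hstr := structure_ae hC hvI hga hHg hzero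
    filter_upwards [hstr, d1_eq_Hv_ae v] with t h1 h2
    rw [h2, h1]
  · rintro ⟨A, B, α, mA, mB, mα, monA, monB, hmem, hae⟩
    apply intervalIntegral.integral_congr_ae
    have h1 := (ae_restrict_iff' measurableSet_Icc).mp hae
    filter_upwards [h1] with v himp hvIoc
    rw [uIoc_of_le zero_le_one] at hvIoc
    have hvI : v ∈ Icc (0:ℝ) 1 := Ioc_subset_Icc_self hvIoc
    have hd1 := himp hvI
    have hstep : ∀ᵐ t ∂(volume.restrict (Icc (0:ℝ) 1)),
        Hv C v t = (if t < A v then (1:ℝ) else 0)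
          + α v * (if t ∈ Ioo (A v) (B v) then (1:ℝ) else 0) := by
      filter_upwards [hd1, d1_eq_Hv_ae v] with t ht1 ht2
      rw [← ht2, ht1]
    exact (backward_per_v hC hvI (hmem v hvI).1 (hmem v hvI).2.1 (hmem v hvI).2.2 hstep).symm

end J

/-- For a stochastically increasing copula `C` with `h_v(t) = ∂₁C(t,v)`:
`ξ(C) = ψ(C)` iff there are non-decreasing measurable `A, B : [0,1] → [0,1]` and a measurable
`α : [0,1] → [0,1]` such that for a.e. `v`, `h_v(t) = 𝟙_{t < A(v)} + α(v)·𝟙_{(A(v),B(v))}(t)`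
for a.e. `t`. -/
theorem si_equality_structure (C : ℝ → ℝ → ℝ) (hC : IsCopula C) (hSI : IsSI C) :
    xi C = psi C ↔
      ∃ A B α : ℝ → ℝ,
        Measurable A ∧ Measurable B ∧ Measurable α ∧
        MonotoneOn A (Icc (0:ℝ) 1) ∧ MonotoneOn B (Icc (0:ℝ) 1) ∧
        (∀ v ∈ Icc (0:ℝ) 1, A v ∈ Icc (0:ℝ) 1 ∧ B v ∈ Icc (0:ℝ) 1 ∧ α v ∈ Icc (0:ℝ) 1) ∧
        (∀ᵐ v ∂(volume.restrict (Icc (0:ℝ) 1)),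
          ∀ᵐ t ∂(volume.restrict (Icc (0:ℝ) 1)),
            d1 C t v =
              (if t < A v then (1:ℝ) else 0) +
                α v * (if t ∈ Ioo (A v) (B v) then (1:ℝ) else 0)) := by
  exact si_equality_structure' hC hSI
end
end

section
/- Every stochastically increasing bivariate copula C satisfies ξ(C) ≤ ψ(C). -/
open MeasureTheory Set

noncomputable section

section
open Filter Topology
namespace XiPsiAux

variable {C : ℝ → ℝ → ℝ}


lemma zero_mem : (0:ℝ) ∈ Icc (0:ℝ) 1 := by norm_num
lemma one_mem : (1:ℝ) ∈ Icc (0:ℝ) 1 := by norm_num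

lemma mono1 (hC : IsCopula C) {v : ℝ} (hv : v ∈ Icc (0:ℝ) 1)
    {a b : ℝ} (ha : a ∈ Icc (0:ℝ) 1) (hb : b ∈ Icc (0:ℝ) 1) (hab : a ≤ b) :
    C a v ≤ C b v := by
  obtain ⟨-, h2, -, h4⟩ := hC
  have := h4 a ha b hb 0 zero_mem v hv hab hv.1
  have ha0 := (h2 a ha).1
  have hb0 := (h2 b hb).1
  linarith

lemma lip1 (hC : IsCopula C) {v : ℝ} (hv : v ∈ Icc (0:ℝ) 1)
    {a b : ℝ} (ha : a ∈ Icc (0:ℝ) 1) (hb : b ∈ Icc (0:ℝ) 1) (hab : a ≤ b) :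
    C b v - C a v ≤ b - a := by
  obtain ⟨-, h2, -, h4⟩ := hC
  have := h4 a ha b hb v hv 1 one_mem hab hv.2
  have ha1 := (h2 a ha).2
  have hb1 := (h2 b hb).2
  linarith

lemma mono2 (hC : IsCopula C) {u : ℝ} (hu : u ∈ Icc (0:ℝ) 1)
    {a b : ℝ} (ha : a ∈ Icc (0:ℝ) 1) (hb : b ∈ Icc (0:ℝ) 1) (hab : a ≤ b) :
    C u a ≤ C u b := by
  obtain ⟨-, -, h3, h4⟩ := hC
  have := h4 0 zero_mem u hu a ha b hb hu.1 hab
  have ha0 := (h3 a ha).1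
  have hb0 := (h3 b hb).1
  linarith

/-- pointwise bound on the partial derivative in the interior -/
lemma d1_mem_Icc (hC : IsCopula C) {v : ℝ} (hv : v ∈ Icc (0:ℝ) 1)
    {t : ℝ} (ht : t ∈ Ioo (0:ℝ) 1) : d1 C t v ∈ Icc (0:ℝ) 1 := by
  by_cases hdiff : DifferentiableAt ℝ (fun s => C s v) t
  · have hd := hdiff.hasDerivAt
    rw [hasDerivAt_iff_tendsto_slope] at hd
    have hd' : Tendsto (slope (fun s => C s v) t) (𝓝[>] t) (𝓝 (d1 C t v)) :=
      hd.mono_left (nhdsWithin_mono _ (fun x hx => ne_of_gt hx))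
    have hev : ∀ᶠ s in 𝓝[>] t, slope (fun s => C s v) t s ∈ Icc (0:ℝ) 1 := by
      filter_upwards [Ioo_mem_nhdsGT_of_mem ⟨le_refl t, ht.2⟩,
        self_mem_nhdsWithin] with s hs (hs' : t < s)
      have hsI : s ∈ Icc (0:ℝ) 1 := ⟨le_of_lt (ht.1.trans hs'), hs.2.le⟩
      have htI : t ∈ Icc (0:ℝ) 1 := ⟨ht.1.le, ht.2.le⟩
      have h1 := mono1 hC hv htI hsI hs'.le
      have h2 := lip1 hC hv htI hsI hs'.le
      rw [slope_def_field]
      constructor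
      · apply div_nonneg (by linarith) (by linarith)
      · rw [div_le_one (by linarith)]; linarith
    have hne : (𝓝[>] t).NeBot := inferInstance
    exact ⟨ge_of_tendsto hd' (hev.mono fun s hs => hs.1),
      le_of_tendsto hd' (hev.mono fun s hs => hs.2)⟩
  · simp [d1, deriv_zero_of_not_differentiableAt hdiff]



/-- Lebesgue differentiation inequality: the integral of `d1` over `Ioo 0 b` is at most `C b v`. -/
lemma ftc_le (hC : IsCopula C) {v : ℝ} (hv : v ∈ Icc (0:ℝ) 1)
    {b : ℝ} (hb : b ∈ Icc (0:ℝ) 1) :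
    ∫ t in Ioo (0:ℝ) b, d1 C t v ≤ C b v := by
  classical
  set proj : ℝ → ℝ := fun t => max 0 (min 1 t) with hproj
  have hprojmem : ∀ t, proj t ∈ Icc (0:ℝ) 1 := fun t =>
    ⟨le_max_left _ _, max_le zero_le_one (min_le_left _ _)⟩
  have hprojeq : ∀ t ∈ Icc (0:ℝ) 1, proj t = t := by
    intro t ht
    simp only [hproj]
    rw [min_eq_right ht.2, max_eq_right ht.1]
  set f : ℝ → ℝ := fun t => C (proj t) v with hf
  have hprojmono : Monotone proj := fun a b hab =>
    max_le_max le_rfl (min_le_min le_rfl hab)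
  have hprojlip : ∀ a b : ℝ, a ≤ b → proj b - proj a ≤ b - a := by
    intro a b hab
    simp only [hproj, max_def, min_def]
    split_ifs <;> linarith
  have hfmono : Monotone f := fun a b hab =>
    mono1 hC hv (hprojmem a) (hprojmem b) (hprojmono hab)
  have hflip : ∀ a b : ℝ, a ≤ b → f b - f a ≤ b - a := fun a b hab =>
    (lip1 hC hv (hprojmem a) (hprojmem b) (hprojmono hab)).trans (hprojlip a b hab)
  have hfcont : Continuous f := by
    rw [Metric.continuous_iff]
    intro x ε hε
    refine ⟨ε, hε, fun y hy => ?_⟩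
    rw [Real.dist_eq] at *
    rcases le_total y x with h | h
    · have h1 := hfmono h
      have h2 := hflip y x h
      rw [abs_sub_lt_iff]; constructor <;> [linarith [abs_lt.1 hy]; linarith [abs_lt.1 hy]]
    · have h1 := hfmono h
      have h2 := hflip x y h
      rw [abs_sub_lt_iff]; constructor <;> [linarith [abs_lt.1 hy]; linarith [abs_lt.1 hy]]
  set s := hfmono.stieltjesFunction with hs
  set μ := s.measure with hμ
  have hsval : ∀ x, s x = f x := by
    intro x
    rw [hfmono.stieltjesFunction_eq]
    exact rightLim_eq_of_tendsto (h := nhdsGT_neBot x)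
      ((hfcont.continuousAt).tendsto.mono_left nhdsWithin_le_nhds)
  have hC0 : C 0 v = 0 := (hC.2.2.1 v hv).1
  have hCb0 : 0 ≤ C b v := (hC.1 b hb v hv).1
  have hμIoc : μ (Ioc (0:ℝ) b) = ENNReal.ofReal (C b v) := by
    rw [hμ, s.measure_Ioc, hsval, hsval]
    have : f b = C b v := by rw [hf]; simp only; rw [hprojeq b hb]
    have h0 : f 0 = 0 := by
      rw [hf]; simp only; rw [hprojeq 0 (by norm_num)]; exact hC0
    rw [this, h0, sub_zero]
  have hderiv_ae : ∀ᵐ t, deriv f t = (μ.rnDeriv volume t).toReal := by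
    filter_upwards [hfmono.ae_hasDerivAt] with t ht using ht.deriv
  have heq : ∀ t ∈ Ioo (0:ℝ) b, d1 C t v = deriv f t := by
    intro t ht
    have htI : t ∈ Ioo (0:ℝ) 1 := ⟨ht.1, lt_of_lt_of_le ht.2 hb.2⟩
    have hev : f =ᶠ[𝓝 t] fun u => C u v := by
      filter_upwards [Ioo_mem_nhds htI.1 htI.2] with u hu
      rw [hf]; simp only; rw [hprojeq u ⟨hu.1.le, hu.2.le⟩]
    rw [d1, ← hev.deriv_eq]
  calc ∫ t in Ioo (0:ℝ) b, d1 C t v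
      = ∫ t in Ioo (0:ℝ) b, (μ.rnDeriv volume t).toReal := by
        apply setIntegral_congr_ae measurableSet_Ioo
        filter_upwards [hderiv_ae] with t ht h't
        rw [heq t h't, ht]
    _ = ∫ t in Ioc (0:ℝ) b, (μ.rnDeriv volume t).toReal := by
        rw [integral_Ioc_eq_integral_Ioo]
    _ ≤ (μ (Ioc (0:ℝ) b)).toReal := by
        apply Measure.setIntegral_toReal_rnDeriv_le
        rw [hμIoc]; exact ENNReal.ofReal_ne_top
    _ = C b v := by rw [hμIoc, ENNReal.toReal_ofReal hCb0]



lemma inner_bound (hC : IsCopula C) {v : ℝ} (hv : v ∈ Icc (0:ℝ) 1)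
    {g : ℝ → ℝ} (hg : AntitoneOn g (Icc (0:ℝ) 1))
    (hge : ∀ᵐ t ∂(volume.restrict (Icc (0:ℝ) 1)), d1 C t v = g t) :
    ∫ t in (0:ℝ)..1, (d1 C t v) ^ 2 ≤ C v v := by
  classical
  set μ₀ := volume.restrict (Ioo (0:ℝ) 1) with hμ₀
  haveI : IsFiniteMeasure μ₀ := by
    constructor
    rw [hμ₀, Measure.restrict_apply_univ, Real.volume_Ioo]
    simp
  set D : ℝ → ℝ := fun t => d1 C t v with hD
  have hDmeas : Measurable D := measurable_deriv _
  have hmem : ∀ᵐ t ∂μ₀, t ∈ Ioo (0:ℝ) 1 := ae_restrict_mem measurableSet_Ioo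
  have hge' : ∀ᵐ t ∂μ₀, D t = g t :=
    ae_mono (Measure.restrict_mono Ioo_subset_Icc_self le_rfl) hge
  set h : ℝ → ℝ := (Iic v).indicator (fun _ => 1) with hh
  set c : ℝ := max (g v) 0 with hc
  have hc0 : 0 ≤ c := le_max_right _ _
  have hmeas_h : Measurable h := measurable_const.indicator measurableSet_Iic
  have habs : ∀ x : ℝ, x ∈ Icc (0:ℝ) 1 → ‖x‖ ≤ 1 := by
    intro x hx; rw [Real.norm_eq_abs, abs_le]; exact ⟨by linarith [hx.1], hx.2⟩
  have hDint : Integrable D μ₀ := by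
    refine ⟨hDmeas.aestronglyMeasurable, HasFiniteIntegral.of_bounded (C := 1) ?_⟩
    filter_upwards [hmem] with t ht
    exact habs _ (d1_mem_Icc hC hv ht)
  have hD2int : Integrable (fun t => D t ^ 2) μ₀ := by
    refine ⟨(hDmeas.pow_const 2).aestronglyMeasurable,
      HasFiniteIntegral.of_bounded (C := 1) ?_⟩
    filter_upwards [hmem] with t ht
    have := d1_mem_Icc hC hv ht
    exact habs _ ⟨sq_nonneg _, by nlinarith [this.1, this.2]⟩
  have hhint : Integrable h μ₀ := by
    refine ⟨hmeas_h.aestronglyMeasurable, HasFiniteIntegral.of_bounded (C := 1) ?_⟩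
    apply Eventually.of_forall
    intro t
    rw [hh]
    by_cases htv : t ∈ Iic v <;> simp [Set.indicator_apply, htv]
  have hDh : Integrable (fun t => D t * h t) μ₀ := by
    refine ⟨(hDmeas.mul hmeas_h).aestronglyMeasurable,
      HasFiniteIntegral.of_bounded (C := 1) ?_⟩
    filter_upwards [hmem] with t ht
    have h1 := d1_mem_Icc hC hv ht
    have h2 : h t = 0 ∨ h t = 1 := by
      rw [hh]; by_cases htv : t ∈ Iic v <;> simp [Set.indicator_apply, htv]
    rcases h2 with h2 | h2 <;> rw [h2] <;> simp <;> exact habs _ h1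
  have hsub : Integrable (fun t => D t - h t) μ₀ := hDint.sub hhint
  have hmul : Integrable (fun t => c * (D t - h t)) μ₀ := hsub.const_mul c
  have hRHSint : Integrable (fun t => D t * h t + c * (D t - h t)) μ₀ := hDh.add hmul
  -- the key pointwise inequality
  have hkey : ∀ᵐ t ∂μ₀, D t ^ 2 ≤ D t * h t + c * (D t - h t) := by
    filter_upwards [hmem, hge'] with t ht hDg
    have hD01 := d1_mem_Icc hC hv ht
    have htI : t ∈ Icc (0:ℝ) 1 := Ioo_subset_Icc_self ht
    by_cases htv : t ≤ v
    · have hht : h t = 1 := by rw [hh]; simp [Set.indicator_apply, mem_Iic, htv]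
      have hgt : g v ≤ g t := hg htI hv htv
      have hcle : c ≤ D t := by
        rw [hc, hDg]
        exact max_le (by rw [← hDg]; rw [hDg]; exact hgt) (by rw [← hDg]; exact hD01.1)
      rw [hht]
      nlinarith [hD01.2, hcle]
    · have hht : h t = 0 := by
        rw [hh]; simp [Set.indicator_apply, mem_Iic, htv]
      have hDle : D t ≤ c := by
        rw [hDg]
        exact (hg hv htI (le_of_not_ge htv)).trans (le_max_left _ _)
      rw [hht]
      nlinarith [hD01.1, hDle]
  -- ∫ h = v
  have hSvol : volume (Iic v ∩ Ioo (0:ℝ) 1) = ENNReal.ofReal v := by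
    apply le_antisymm
    · calc volume (Iic v ∩ Ioo (0:ℝ) 1) ≤ volume (Ioc 0 v) := by
            apply measure_mono
            rintro t ⟨h1, h2⟩
            exact ⟨h2.1, h1⟩
        _ = ENNReal.ofReal v := by rw [Real.volume_Ioc, sub_zero]
    · calc ENNReal.ofReal v = volume (Ioo (0:ℝ) v) := by rw [Real.volume_Ioo, sub_zero]
        _ ≤ volume (Iic v ∩ Ioo (0:ℝ) 1) := by
            apply measure_mono
            rintro t ⟨h1, h2⟩
            exact ⟨h2.le, h1, lt_of_lt_of_le h2 hv.2⟩
  have hinth : ∫ t, h t ∂μ₀ = v := by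
    rw [hh, integral_indicator measurableSet_Iic, setIntegral_const, hμ₀,
      measureReal_restrict_apply measurableSet_Iic, measureReal_def, hSvol, smul_eq_mul, mul_one,
      ENNReal.toReal_ofReal hv.1]
  -- ∫ D * h ≤ C v v
  have hintDh : ∫ t, D t * h t ∂μ₀ ≤ C v v := by
    have hfun : (fun t => D t * h t) = (Iic v).indicator D := by
      funext t
      rw [hh]
      by_cases htv : t ∈ Iic v <;> simp [Set.indicator_apply, htv]
    rw [hfun, integral_indicator measurableSet_Iic, hμ₀,
      Measure.restrict_restrict measurableSet_Iic]
    have hae : (Iic v ∩ Ioo (0:ℝ) 1 : Set ℝ) =ᵐ[volume] Ioo (0:ℝ) v := by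
      rw [ae_eq_set]
      constructor
      · apply measure_mono_null (t := {v})
        · rintro t ⟨⟨h1, h2⟩, h3⟩
          simp only [mem_Ioo, not_and, not_lt] at h3
          have := h3 h2.1
          simp only [mem_singleton_iff]
          simp only [mem_Iic] at h1
          linarith
        · exact measure_singleton v
      · apply measure_mono_null (t := (∅ : Set ℝ))
        · rintro t ⟨h1, h2⟩
          exact absurd ⟨h1.2.le, h1.1, lt_of_lt_of_le h1.2 hv.2⟩ h2
        · exact measure_empty
    rw [Measure.restrict_congr_set hae]
    exact ftc_le hC hv hv
  -- ∫ D ≤ v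
  have hintD : ∫ t, D t ∂μ₀ ≤ v := by
    have h1 := ftc_le hC hv one_mem
    rw [(hC.2.2.1 v hv).2] at h1
    exact h1
  calc ∫ t in (0:ℝ)..1, (d1 C t v) ^ 2
      = ∫ t, D t ^ 2 ∂μ₀ := by
        rw [intervalIntegral.integral_of_le zero_le_one, integral_Ioc_eq_integral_Ioo]
    _ ≤ ∫ t, (D t * h t + c * (D t - h t)) ∂μ₀ := integral_mono_ae hD2int hRHSint hkey
    _ = (∫ t, D t * h t ∂μ₀) + c * ((∫ t, D t ∂μ₀) - ∫ t, h t ∂μ₀) := by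
        rw [integral_add hDh hmul, integral_const_mul,
          integral_sub hDint hhint]
    _ ≤ C v v := by
        have : c * ((∫ t, D t ∂μ₀) - ∫ t, h t ∂μ₀) ≤ 0 := by
          apply mul_nonpos_of_nonneg_of_nonpos hc0
          rw [hinth]; linarith
        linarith
end XiPsiAux
end

/-- Every stochastically increasing bivariate copula satisfies `ξ(C) ≤ ψ(C)`. -/
theorem xi_le_psi_of_SI (C : ℝ → ℝ → ℝ) (hC : IsCopula C) (hSI : IsSI C) :
    xi C ≤ psi C := by
  have hCint : IntervalIntegrable (fun v => C v v) volume 0 1 := by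
    apply MonotoneOn.intervalIntegrable
    rw [uIcc_of_le zero_le_one]
    intro a ha b hb hab
    exact (XiPsiAux.mono1 hC ha ha hb hab).trans (XiPsiAux.mono2 hC hb ha hb hab)
  by_cases hG : IntervalIntegrable (fun v => ∫ t in (0:ℝ)..1, (d1 C t v) ^ 2) volume 0 1
  · have hle := intervalIntegral.integral_mono_on zero_le_one hG hCint ?_
    · simp only [xi, psi]; linarith
    · intro v hv
      obtain ⟨g, hg, hge⟩ := hSI v hv
      exact XiPsiAux.inner_bound hC hv hg hge
  · have h0 : (0:ℝ) ≤ ∫ v in (0:ℝ)..1, C v v :=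
      intervalIntegral.integral_nonneg zero_le_one (fun u hu => (hC.1 u hu u hu).1)
    simp only [xi, psi, intervalIntegral.integral_undef hG]
    linarith
end
end

section
/- For every α ∈ (0,1], the ordinal sum C_α of the independence copula Π on the interval (0,α), defined by C_α(u,v) = uv/α for (u,v) ∈ (0,α)² and C_α(u,v) = min(u,v) otherwise, is a stochastically increasing bivariate copula satisfying ξ(C_α) = ψ(C_α) = 1 − α². -/
open MeasureTheory Set

noncomputable section

/-- The ordinal sum of the independence copula `Π` on the interval `(0,α)`. -/
def ordinalSumPi (α : ℝ) (u v : ℝ) : ℝ :=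
  if u ∈ Ioo (0:ℝ) α ∧ v ∈ Ioo (0:ℝ) α then u * v / α else min u v

/-! ### Auxiliary lemmas -/

lemma min_super' {a₁ a₂ b₁ b₂ : ℝ} (ha : a₁ ≤ a₂) (hb : b₁ ≤ b₂) :
    min a₁ b₂ + min a₂ b₁ ≤ min a₂ b₂ + min a₁ b₁ := by
  simp only [min_def]; split_ifs <;> linarith

lemma osp_min_repr {α : ℝ} (h0 : 0 < α) (a b : ℝ) (hb : 0 ≤ b) (hc : a = 0 ∨ α ≤ a) :
    min a b = min (max (a - α) 0) (max (b - α) 0) + min a α * min b α / α := by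
  rcases hc with rfl | hc
  · rw [min_eq_left hb, min_eq_left h0.le, zero_sub, max_eq_right (by linarith : -α ≤ (0:ℝ)),
      min_eq_left (le_max_right (b - α) 0)]
    simp
  · rw [max_eq_left (by linarith : (0:ℝ) ≤ a - α), min_eq_right hc,
      mul_comm, mul_div_assoc, div_self h0.ne', mul_one]
    rcases le_total b α with hbα | hbα
    · rw [max_eq_right (by linarith : b - α ≤ 0), min_eq_right (by linarith : (0:ℝ) ≤ a - α),
        min_eq_left hbα, min_eq_right (hbα.trans hc)]
      ring
    · rw [max_eq_left (by linarith : (0:ℝ) ≤ b - α), min_eq_right hbα]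
      simp only [min_def]
      split_ifs <;> linarith

lemma osp_repr {α : ℝ} (h0 : 0 < α) {u v : ℝ} (hu : 0 ≤ u) (hv : 0 ≤ v) :
    ordinalSumPi α u v =
      min (max (u - α) 0) (max (v - α) 0) + min u α * min v α / α := by
  unfold ordinalSumPi
  by_cases h : u ∈ Ioo (0:ℝ) α ∧ v ∈ Ioo (0:ℝ) α
  · obtain ⟨⟨hu0, huα⟩, hv0, hvα⟩ := h
    rw [if_pos ⟨⟨hu0, huα⟩, hv0, hvα⟩, max_eq_right (by linarith : u - α ≤ 0),
      max_eq_right (by linarith : v - α ≤ 0), min_eq_left huα.le, min_eq_left hvα.le]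
    simp
  · rw [if_neg h]
    rw [not_and_or] at h
    rcases h with h | h
    · have : u = 0 ∨ α ≤ u := by
        rw [mem_Ioo, not_and_or, not_lt, not_lt] at h
        rcases h with h | h
        · exact Or.inl (le_antisymm h hu)
        · exact Or.inr h
      exact osp_min_repr h0 u v hv this
    · have : v = 0 ∨ α ≤ v := by
        rw [mem_Ioo, not_and_or, not_lt, not_lt] at h
        rcases h with h | h
        · exact Or.inl (le_antisymm h hv)
        · exact Or.inr h
      rw [min_comm u v, min_comm (max (u - α) 0) (max (v - α) 0),
        mul_comm (min u α) (min v α)]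
      exact osp_min_repr h0 v u hu this

lemma osp_rect {α : ℝ} (h0 : 0 < α) {u₁ u₂ v₁ v₂ : ℝ}
    (hu1 : 0 ≤ u₁) (hv1 : 0 ≤ v₁) (hu : u₁ ≤ u₂) (hv : v₁ ≤ v₂) :
    0 ≤ ordinalSumPi α u₂ v₂ - ordinalSumPi α u₁ v₂ - ordinalSumPi α u₂ v₁
      + ordinalSumPi α u₁ v₁ := by
  have hu2 : 0 ≤ u₂ := hu1.trans hu
  have hv2 : 0 ≤ v₂ := hv1.trans hv
  rw [osp_repr h0 hu2 hv2, osp_repr h0 hu1 hv2, osp_repr h0 hu2 hv1, osp_repr h0 hu1 hv1]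
  have hA := min_super' (max_le_max (by linarith : u₁ - α ≤ u₂ - α) (le_refl (0:ℝ)))
    (max_le_max (by linarith : v₁ - α ≤ v₂ - α) (le_refl (0:ℝ)))
  have hm : min u₁ α ≤ min u₂ α := min_le_min hu le_rfl
  have hm' : min v₁ α ≤ min v₂ α := min_le_min hv le_rfl
  have hB : 0 ≤ (min u₂ α * min v₂ α - min u₁ α * min v₂ α - min u₂ α * min v₁ α
      + min u₁ α * min v₁ α) / α := by
    have h : min u₂ α * min v₂ α - min u₁ α * min v₂ α - min u₂ α * min v₁ α
        + min u₁ α * min v₁ α = (min u₂ α - min u₁ α) * (min v₂ α - min v₁ α) := by ring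
    rw [h]
    exact div_nonneg (mul_nonneg (by linarith) (by linarith)) h0.le
  have hexp : min u₂ α * min v₂ α / α - min u₁ α * min v₂ α / α - min u₂ α * min v₁ α / α
      + min u₁ α * min v₁ α / α = (min u₂ α * min v₂ α - min u₁ α * min v₂ α
      - min u₂ α * min v₁ α + min u₁ α * min v₁ α) / α := by ring
  linarith [hexp ▸ hB]

lemma ae_nmem_triple (a b c : ℝ) : ∀ᵐ t : ℝ, t ∉ ({a, b, c} : Set ℝ) := by
  have h : volume ({a, b, c} : Set ℝ) = 0 := (Set.toFinite _).measure_zero _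
  exact measure_eq_zero_iff_ae_notMem.mp h

lemma step_anti {β c : ℝ} (hc : 0 ≤ c) :
    AntitoneOn (fun t => if t ≤ β then c else 0) (Icc (0:ℝ) 1) := by
  intro x _ y _ hxy
  by_cases hx : x ≤ β <;> by_cases hy : y ≤ β <;> simp only [hx, hy, if_true, if_false]
  · exact le_rfl
  · exact hc
  · exact absurd (hxy.trans hy) hx
  · exact le_rfl

lemma osp_deriv {α : ℝ} (h0 : 0 < α) (h1 : α ≤ 1) {v : ℝ} (hv : v ∈ Icc (0:ℝ) 1)
    {t : ℝ} (ht : t ∈ Ioo (0:ℝ) 1) (hβ : t ≠ (if v < α then α else v)) :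
    d1 (ordinalSumPi α) t v =
      if t ≤ (if v < α then α else v) then (if v < α then v / α else 1) else 0 := by
  by_cases hvα : v < α
  · simp only [if_pos hvα] at hβ ⊢
    rcases lt_or_gt_of_ne hβ with htα | htα
    · rw [if_pos htα.le]
      rcases eq_or_lt_of_le hv.1 with hv0 | hv0
      · have he : (fun s => ordinalSumPi α s v) =ᶠ[nhds t] fun _ => 0 := by
          filter_upwards [isOpen_Ioi.mem_nhds ht.1] with s hs
          have hnv : v ∉ Ioo (0:ℝ) α := by rw [← hv0]; simp
          rw [ordinalSumPi, if_neg (fun h => hnv h.2), ← hv0, min_eq_right (le_of_lt hs)]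
        rw [d1, he.deriv_eq, deriv_const, ← hv0, zero_div]
      · have he : (fun s => ordinalSumPi α s v) =ᶠ[nhds t] fun s => s * (v / α) := by
          filter_upwards [isOpen_Ioo.mem_nhds (⟨ht.1, htα⟩ : t ∈ Ioo (0:ℝ) α)] with s hs
          rw [ordinalSumPi, if_pos ⟨hs, hv0, hvα⟩, mul_div_assoc]
        rw [d1, he.deriv_eq]
        simpa using ((hasDerivAt_id t).mul_const (v / α)).deriv
    · rw [if_neg (not_le.2 htα)]
      have he : (fun s => ordinalSumPi α s v) =ᶠ[nhds t] fun _ => v := by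
        filter_upwards [isOpen_Ioi.mem_nhds (mem_Ioi.2 htα)] with s hs
        have hns : s ∉ Ioo (0:ℝ) α := fun h => absurd h.2 (not_lt.2 (le_of_lt hs))
        rw [ordinalSumPi, if_neg (fun h => hns h.1), min_eq_right (by linarith [mem_Ioi.1 hs])]
      rw [d1, he.deriv_eq, deriv_const]
  · simp only [if_neg hvα] at hβ ⊢
    have hnv : v ∉ Ioo (0:ℝ) α := fun h => hvα h.2
    rcases lt_or_gt_of_ne hβ with htv | htv
    · rw [if_pos htv.le]
      have he : (fun s => ordinalSumPi α s v) =ᶠ[nhds t] fun s => s := by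
        filter_upwards [isOpen_Iio.mem_nhds (mem_Iio.2 htv)] with s hs
        rw [ordinalSumPi, if_neg (fun h => hnv h.2), min_eq_left (le_of_lt hs)]
      rw [d1, he.deriv_eq, deriv_id'']
    · rw [if_neg (not_le.2 htv)]
      have he : (fun s => ordinalSumPi α s v) =ᶠ[nhds t] fun _ => v := by
        filter_upwards [isOpen_Ioi.mem_nhds (mem_Ioi.2 htv)] with s hs
        rw [ordinalSumPi, if_neg (fun h => hnv h.2), min_eq_right (le_of_lt hs)]
      rw [d1, he.deriv_eq, deriv_const]

lemma osp_step_integral {β c : ℝ} (hβ : β ∈ Icc (0:ℝ) 1) :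
    ∫ t in (0:ℝ)..1, (if t ≤ β then c else 0) ^ 2 = c ^ 2 * β := by
  have h : ∀ t : ℝ, (if t ≤ β then c else 0) ^ 2
      = Set.indicator {x : ℝ | x ≤ β} (fun _ => c ^ 2) t := by
    intro t
    by_cases h : t ≤ β <;> simp [indicator_apply, mem_setOf_eq, h]
  rw [intervalIntegral.integral_congr (fun t _ => h t),
    intervalIntegral.integral_indicator hβ, intervalIntegral.integral_const]
  simp [mul_comm]

lemma osp_inner {α : ℝ} (h0 : 0 < α) (h1 : α ≤ 1) {v : ℝ} (hv : v ∈ Icc (0:ℝ) 1) :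
    ∫ t in (0:ℝ)..1, (d1 (ordinalSumPi α) t v) ^ 2
      = if v < α then v ^ 2 / α else v := by
  set β : ℝ := if v < α then α else v with hβdef
  set c : ℝ := if v < α then v / α else 1 with hcdef
  have hβmem : β ∈ Icc (0:ℝ) 1 := by
    rw [hβdef]; split_ifs; exacts [⟨h0.le, h1⟩, hv]
  have step1 : ∫ t in (0:ℝ)..1, (d1 (ordinalSumPi α) t v) ^ 2
      = ∫ t in (0:ℝ)..1, (if t ≤ β then c else 0) ^ 2 := by
    apply intervalIntegral.integral_congr_ae
    filter_upwards [ae_nmem_triple 0 1 β] with t ht2 htΙ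
    rw [Set.uIoc_of_le (by norm_num : (0:ℝ) ≤ 1)] at htΙ
    simp only [mem_insert_iff, mem_singleton_iff, not_or] at ht2
    have ht : t ∈ Ioo (0:ℝ) 1 := ⟨htΙ.1, lt_of_le_of_ne htΙ.2 ht2.2.1⟩
    rw [osp_deriv h0 h1 hv ht ht2.2.2]
  rw [step1, osp_step_integral hβmem]
  rw [hβdef, hcdef]
  split_ifs with h
  · field_simp
  · ring

lemma osp_diag {α : ℝ} (h0 : 0 < α) {v : ℝ} (hv : v ∈ Icc (0:ℝ) 1) :
    ordinalSumPi α v v = if v < α then v ^ 2 / α else v := by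
  unfold ordinalSumPi
  by_cases h : v ∈ Ioo (0:ℝ) α
  · rw [if_pos ⟨h, h⟩, if_pos h.2]
    ring
  · have hnv : ¬(v ∈ Ioo (0:ℝ) α ∧ v ∈ Ioo (0:ℝ) α) := fun hh => h hh.1
    rw [if_neg hnv, min_self]
    rw [mem_Ioo, not_and_or, not_lt, not_lt] at h
    rcases h with h | h
    · have : v = 0 := le_antisymm h hv.1
      subst this
      simp [h0]
    · rw [if_neg (not_lt.2 h)]

lemma osp_J_integral {α : ℝ} (h0 : 0 < α) (h1 : α ≤ 1) :
    ∫ v in (0:ℝ)..1, (if v < α then v ^ 2 / α else v)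
      = 1 / 2 + (α ^ 2 / 3 - α ^ 2 / 2) := by
  have key : ∀ v : ℝ, (if v < α then v ^ 2 / α else v)
      = v + Set.indicator {x : ℝ | x ≤ α} (fun x => x ^ 2 / α - x) v := by
    intro v
    by_cases hle : v ≤ α
    · rcases eq_or_lt_of_le hle with rfl | hlt
      · rw [if_neg (lt_irrefl _)]
        simp only [indicator_apply, mem_setOf_eq, le_refl, if_true]
        field_simp
        ring
      · rw [if_pos hlt]
        simp only [indicator_apply, mem_setOf_eq, hle, if_true]
        ring
    · rw [if_neg (fun h => hle h.le)]
      simp only [indicator_apply, mem_setOf_eq, hle, if_false, add_zero]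
  have hint : IntervalIntegrable
      (Set.indicator {x : ℝ | x ≤ α} (fun x => x ^ 2 / α - x)) volume 0 1 := by
    rw [intervalIntegrable_iff]
    apply MeasureTheory.Integrable.indicator _ measurableSet_Iic
    exact (intervalIntegrable_iff.mp
      (((continuous_pow 2).div_const α |>.sub continuous_id).intervalIntegrable 0 1))
  rw [intervalIntegral.integral_congr (fun v _ => key v),
    intervalIntegral.integral_add intervalIntegral.intervalIntegrable_id hint,
    intervalIntegral.integral_indicator (⟨h0.le, h1⟩ : α ∈ Icc (0:ℝ) 1)]
  rw [intervalIntegral.integral_sub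
      (((continuous_pow 2).div_const α).intervalIntegrable 0 α)
      intervalIntegral.intervalIntegrable_id,
    intervalIntegral.integral_div, integral_pow, integral_id]
  norm_num
  field_simp

/-- For `α ∈ (0,1]`, the ordinal sum of `Π` on `(0,α)` is a stochastically
increasing bivariate copula with `ξ = ψ = 1 - α²`. -/
theorem ordinalSumPi_xi_eq_psi (α : ℝ) (hα : α ∈ Ioc (0:ℝ) 1) :
    IsCopula (ordinalSumPi α) ∧ IsSI (ordinalSumPi α) ∧
    xi (ordinalSumPi α) = 1 - α ^ 2 ∧ psi (ordinalSumPi α) = 1 - α ^ 2 := by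
  obtain ⟨h0, h1⟩ := hα
  have hone : ¬((1:ℝ) ∈ Ioo (0:ℝ) α) := fun h => absurd h.2 (not_lt.2 h1)
  have hzero : ¬((0:ℝ) ∈ Ioo (0:ℝ) α) := fun h => lt_irrefl 0 h.1
  refine ⟨⟨?_, ?_, ?_, ?_⟩, ?_, ?_, ?_⟩
  · -- range
    intro u hu v hv
    unfold ordinalSumPi
    split_ifs with h
    · constructor
      · exact div_nonneg (mul_nonneg hu.1 hv.1) h0.le
      · rw [div_le_one h0]
        nlinarith [h.1.2, hv.1, hv.2, h1]
    · exact ⟨le_min hu.1 hv.1, (min_le_left u v).trans hu.2⟩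
  · -- C u 0 = 0, C u 1 = u
    intro u hu
    constructor
    · rw [ordinalSumPi, if_neg (fun h => hzero h.2), min_eq_right hu.1]
    · rw [ordinalSumPi, if_neg (fun h => hone h.2), min_eq_left hu.2]
  · -- C 0 v = 0, C 1 v = v
    intro v hv
    constructor
    · rw [ordinalSumPi, if_neg (fun h => hzero h.1), min_eq_left hv.1]
    · rw [ordinalSumPi, if_neg (fun h => hone h.1), min_eq_right hv.2]
  · -- rectangle inequality
    intro u₁ hu₁ u₂ _ v₁ hv₁ v₂ _ hu hv
    exact osp_rect h0 hu₁.1 hv₁.1 hu hv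
  · -- SI
    intro v hv
    refine ⟨fun t => if t ≤ (if v < α then α else v) then (if v < α then v / α else 1) else 0,
      ?_, ?_⟩
    · apply step_anti
      split_ifs with h
      · exact div_nonneg hv.1 h0.le
      · exact zero_le_one
    · filter_upwards [ae_restrict_mem measurableSet_Icc,
        ae_restrict_of_ae (ae_nmem_triple 0 1 (if v < α then α else v))] with t ht1 ht2
      simp only [mem_insert_iff, mem_singleton_iff, not_or] at ht2
      have ht : t ∈ Ioo (0:ℝ) 1 :=
        ⟨lt_of_le_of_ne ht1.1 (Ne.symm ht2.1), lt_of_le_of_ne ht1.2 ht2.2.1⟩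
      exact osp_deriv h0 h1 hv ht ht2.2.2
  · -- xi
    have houter : ∫ v in (0:ℝ)..1, (∫ t in (0:ℝ)..1, (d1 (ordinalSumPi α) t v) ^ 2)
        = ∫ v in (0:ℝ)..1, (if v < α then v ^ 2 / α else v) := by
      apply intervalIntegral.integral_congr
      intro v hvm
      rw [Set.uIcc_of_le (by norm_num : (0:ℝ) ≤ 1)] at hvm
      exact osp_inner h0 h1 hvm
    rw [xi, houter, osp_J_integral h0 h1]
    ring
  · -- psi
    have houter : ∫ v in (0:ℝ)..1, ordinalSumPi α v v
        = ∫ v in (0:ℝ)..1, (if v < α then v ^ 2 / α else v) := by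
      apply intervalIntegral.integral_congr
      intro v hvm
      rw [Set.uIcc_of_le (by norm_num : (0:ℝ) ≤ 1)] at hvm
      exact osp_diag h0 hvm
    rw [psi, houter, osp_J_integral h0 h1]
    ring
end
end
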